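/- arXiv:1001.4013 — 4 statements merged into one kernel-verified Lean document; each statement's English description precedes it below -/
import Mathlib

section
/- Let a < b be real numbers and let α > 0. The left Liouville fractional integral operator I_{a+}^α is injective on L²(a,b): if f ∈ L²(a,b) satisfies I_{a+}^α f = 0 almost everywhere on (a,b), then f = 0 almost everywhere on (a,b). The same holds for the right fractional integral I_{b-}^α. -/
open MeasureTheory Set
open scoped NNReal ENNReal

/-- The left Liouville fractional integral of order `α` on `(a,·)`:
`(I_{a+}^α f)(t) = Γ(α)⁻¹ ∫_a^t (t-s)^(α-1) f(s) ds`. -/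
noncomputable def leftFrac (a α : ℝ) (f : ℝ → ℝ) : ℝ → ℝ :=
  fun t => (Real.Gamma α)⁻¹ * ∫ s in Ioo a t, (t - s) ^ (α - 1) * f s

/-- The right Liouville fractional integral of order `α` on `(·,b)`:
`(I_{b-}^α f)(t) = Γ(α)⁻¹ ∫_t^b (s-t)^(α-1) f(s) ds`. -/
noncomputable def rightFrac (b α : ℝ) (f : ℝ → ℝ) : ℝ → ℝ :=
  fun t => (Real.Gamma α)⁻¹ * ∫ s in Ioo t b, (s - t) ^ (α - 1) * f s

/-- Lebesgue measure restricted to the interval `(a,b)`, modelling `L²(a,b)`. -/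
noncomputable def msr (a b : ℝ) : Measure ℝ := volume.restrict (Ioo a b)


noncomputable def Bc (α : ℝ) (k : ℕ) : ℝ := ∫ v in (0:ℝ)..1, v ^ (α-1) * (1-v)^k

lemma core_ii (α : ℝ) (hα : 0 < α) (k : ℕ) (c d : ℝ) :
    IntervalIntegrable (fun u => u ^ (α-1) * (d-u)^k) volume 0 c :=
  (intervalIntegral.intervalIntegrable_rpow' (by linarith)).mul_continuousOn
    (Continuous.continuousOn (by continuity))

lemma Bc_pos (α : ℝ) (hα : 0 < α) (k : ℕ) : 0 < Bc α k := by
  apply intervalIntegral.intervalIntegral_pos_of_pos_on (core_ii α hα k 1 1)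
  · intro x hx
    have h1 : 0 < x ^ (α-1) := Real.rpow_pos_of_pos hx.1 _
    have h2 : 0 < (1-x)^k := pow_pos (by linarith [hx.2]) k
    positivity
  · norm_num

lemma core_val (α : ℝ) (hα : 0 < α) (k : ℕ) (d : ℝ) (hd : 0 < d) :
    ∫ u in (0:ℝ)..d, u ^ (α-1) * (d-u)^k = d ^ α * d ^ k * Bc α k := by
  have h := intervalIntegral.smul_integral_comp_mul_left (a := (0:ℝ)) (b := 1)
    (fun u => u ^ (α-1) * (d-u)^k) d
  rw [mul_zero, mul_one] at h
  rw [← h]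
  have hcong : ∀ v ∈ uIcc (0:ℝ) 1,
      (fun u => u ^ (α-1) * (d-u)^k) (d*v) = d ^ (α-1) * d ^ k * (v ^ (α-1) * (1-v)^k) := by
    intro v hv
    rw [uIcc_of_le zero_le_one] at hv
    simp only
    rw [Real.mul_rpow hd.le hv.1, show d - d*v = d*(1-v) by ring, mul_pow]
    ring
  rw [intervalIntegral.integral_congr hcong, intervalIntegral.integral_const_mul]
  have hdd : d * d ^ (α-1) = d ^ α := by
    have h2 := Real.rpow_add hd 1 (α-1)
    rw [Real.rpow_one] at h2
    rw [← h2]; norm_num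
  rw [smul_eq_mul, ← hdd, Bc]; ring

lemma left_inner (α : ℝ) (hα : 0 < α) (k : ℕ) {s b : ℝ} (hsb : s < b) :
    IntegrableOn (fun t => (t-s) ^ (α-1) * (b-t)^k) (Ioo s b) volume ∧
    ∫ t in Ioo s b, (t-s) ^ (α-1) * (b-t)^k
      = (b-s) ^ α * (b-s)^k * Bc α k := by
  set d := b - s with hd
  have hd0 : 0 < d := by simp [hd]; linarith
  have hii : IntervalIntegrable (fun t => (t-s) ^ (α-1) * (b-t)^k) volume s b := by
    have := (core_ii α hα k d d).comp_sub_right s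
    simp only [zero_add] at this
    have he : (fun x => (fun u => u ^ (α-1) * (d-u)^k) (x - s))
        = fun t => (t-s) ^ (α-1) * (b-t)^k := by
      funext x; simp only [hd]; ring_nf
    rw [he] at this
    convert this using 2 <;> simp [hd]
  constructor
  · exact ((intervalIntegrable_iff_integrableOn_Ioc_of_le hsb.le).mp hii).mono_set
      Ioo_subset_Ioc_self
  · rw [← integral_Ioc_eq_integral_Ioo, ← intervalIntegral.integral_of_le hsb.le]
    have h := intervalIntegral.integral_comp_add_right (a := (0:ℝ)) (b := d)
      (fun t => (t-s) ^ (α-1) * (b-t)^k) s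
    rw [zero_add, show d + s = b by simp [hd]] at h
    rw [← h]
    have : ∀ u ∈ uIcc (0:ℝ) d,
        (fun t => (t-s) ^ (α-1) * (b-t)^k) (u + s) = u ^ (α-1) * (d-u)^k := by
      intro u _; simp only; rw [add_sub_cancel_right, show b - (u+s) = d - u by simp [hd]; ring]
    rw [intervalIntegral.integral_congr this, core_val α hα k d hd0]

lemma right_inner (α : ℝ) (hα : 0 < α) (k : ℕ) {a s : ℝ} (has : a < s) :
    IntegrableOn (fun t => (s-t) ^ (α-1) * (t-a)^k) (Ioo a s) volume ∧
    ∫ t in Ioo a s, (s-t) ^ (α-1) * (t-a)^k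
      = (s-a) ^ α * (s-a)^k * Bc α k := by
  set d := s - a with hd
  have hd0 : 0 < d := by simp [hd]; linarith
  have hii : IntervalIntegrable (fun t => (s-t) ^ (α-1) * (t-a)^k) volume a s := by
    have := (core_ii α hα k d d).comp_sub_left s
    have he : (fun x => (fun u => u ^ (α-1) * (d-u)^k) (s - x))
        = fun t => (s-t) ^ (α-1) * (t-a)^k := by
      funext x; simp only [hd]; ring_nf
    rw [he] at this
    have h1 : s - d = a := by simp [hd]
    rw [h1, sub_zero] at this
    exact this.symm
  constructor
  · exact ((intervalIntegrable_iff_integrableOn_Ioc_of_le has.le).mp hii).mono_set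
      Ioo_subset_Ioc_self
  · rw [← integral_Ioc_eq_integral_Ioo, ← intervalIntegral.integral_of_le has.le]
    have h := intervalIntegral.integral_comp_sub_left (a := (0:ℝ)) (b := d)
      (fun t => (s-t) ^ (α-1) * (t-a)^k) s
    rw [sub_zero, show s - d = a by simp [hd]] at h
    rw [← h]
    have : ∀ u ∈ uIcc (0:ℝ) d,
        (fun t => (s-t) ^ (α-1) * (t-a)^k) (s - u) = u ^ (α-1) * (d-u)^k := by
      intro u _; simp only; rw [sub_sub_cancel, show s - u - a = d - u by simp [hd]; ring]
    rw [intervalIntegral.integral_congr this, core_val α hα k d hd0]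


lemma ae_mem_msr (a b : ℝ) : ∀ᵐ x ∂(msr a b), x ∈ Ioo a b :=
  self_mem_ae_restrict measurableSet_Ioo

instance msr_finite (a b : ℝ) : IsFiniteMeasure (msr a b) := by
  constructor
  rw [msr, Measure.restrict_apply_univ]
  exact measure_Ioo_lt_top

lemma inner_ind_left (a b α : ℝ) (hα : 0 < α) (k : ℕ) {s : ℝ} (hs : s ∈ Ioo a b)
    (c : ℝ) (h : ℝ → ℝ) (hh : ∀ t ∈ Ioo s b, h t = (t-s) ^ (α-1) * (b-t)^k * c) :
    ∫ t, (Ioi s).indicator h t ∂(msr a b) = (b-s) ^ α * (b-s)^k * Bc α k * c := by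
  rw [msr, integral_indicator measurableSet_Ioi, Measure.restrict_restrict measurableSet_Ioi,
    show Ioi s ∩ Ioo a b = Ioo s b by rw [inter_comm, Ioo_inter_Ioi, max_eq_right hs.1.le],
    setIntegral_congr_fun measurableSet_Ioo hh, integral_mul_const,
    (left_inner α hα k hs.2).2]

lemma inner_ind_right (a b α : ℝ) (hα : 0 < α) (k : ℕ) {s : ℝ} (hs : s ∈ Ioo a b)
    (c : ℝ) (h : ℝ → ℝ) (hh : ∀ t ∈ Ioo a s, h t = (s-t) ^ (α-1) * (t-a)^k * c) :
    ∫ t, (Iio s).indicator h t ∂(msr a b) = (s-a) ^ α * (s-a)^k * Bc α k * c := by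
  rw [msr, integral_indicator measurableSet_Iio, Measure.restrict_restrict measurableSet_Iio,
    show Iio s ∩ Ioo a b = Ioo a s by rw [inter_comm, Ioo_inter_Iio, min_eq_right hs.2.le],
    setIntegral_congr_fun measurableSet_Ioo hh, integral_mul_const,
    (right_inner α hα k hs.1).2]

lemma fubini_left (a b α : ℝ) (hab : a < b) (hα : 0 < α) (k : ℕ) (f : ℝ → ℝ)
    (hm : Measurable f) (hfi : Integrable f (msr a b)) :
    ∫ t, (b-t)^k * (∫ s in Ioo a t, (t-s) ^ (α-1) * f s) ∂(msr a b)
      = ∫ s, (b-s) ^ α * (b-s)^k * Bc α k * f s ∂(msr a b) := by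
  set F : ℝ → ℝ → ℝ := fun s t =>
    Set.indicator {p : ℝ × ℝ | p.1 < p.2}
      (fun p => (p.2-p.1) ^ (α-1) * (b-p.2)^k * f p.1) (s, t) with hF
  have hmeasF : Measurable (Function.uncurry F) := by
    apply Measurable.indicator
    · apply Measurable.mul
      · apply Measurable.mul
        · fun_prop
        · fun_prop
      · exact hm.comp measurable_fst
    · exact measurableSet_lt measurable_fst measurable_snd
  have hFs : ∀ s : ℝ, (fun t => F s t)
      = (Ioi s).indicator (fun t => (t-s) ^ (α-1) * (b-t)^k * f s) := by
    intro s; funext t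
    simp only [hF, Set.indicator_apply, Set.mem_setOf_eq, Set.mem_Ioi]
  have hFt : ∀ t : ℝ, (fun s => F s t)
      = (Iio t).indicator (fun s => (t-s) ^ (α-1) * (b-t)^k * f s) := by
    intro t; funext s
    simp only [hF, Set.indicator_apply, Set.mem_setOf_eq, Set.mem_Iio]
  have hint : Integrable (Function.uncurry F) ((msr a b).prod (msr a b)) := by
    rw [integrable_prod_iff hmeasF.aestronglyMeasurable]
    constructor
    · filter_upwards [ae_mem_msr a b] with s hs
      show Integrable (fun t => F s t) (msr a b)
      rw [hFs s, msr, integrable_indicator_iff measurableSet_Ioi]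
      unfold IntegrableOn
      rw [Measure.restrict_restrict measurableSet_Ioi,
        show Ioi s ∩ Ioo a b = Ioo s b by rw [inter_comm, Ioo_inter_Ioi, max_eq_right hs.1.le]]
      exact (left_inner α hα k hs.2).1.mul_const (f s)
    · apply Integrable.mono' ((hfi.abs.mul_const ((b-a) ^ α * (b-a)^k * Bc α k)))
      · exact (hmeasF.norm.stronglyMeasurable.integral_prod_right').aestronglyMeasurable
      · filter_upwards [ae_mem_msr a b] with s hs
        show ‖∫ t, ‖F s t‖ ∂(msr a b)‖ ≤ _
        have hval : ∫ t, ‖F s t‖ ∂(msr a b) = (b-s) ^ α * (b-s)^k * Bc α k * |f s| := by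
          have : (fun t => ‖F s t‖)
              = (Ioi s).indicator (fun t => ‖(t-s) ^ (α-1) * (b-t)^k * f s‖) := by
            funext t
            rw [show ‖F s t‖ = ‖(fun u => F s u) t‖ from rfl, hFs s,
              norm_indicator_eq_indicator_norm]
          rw [this]
          apply inner_ind_left a b α hα k hs
          intro t ht
          rw [Real.norm_eq_abs, abs_mul, abs_mul, abs_of_nonneg (Real.rpow_nonneg (by linarith [ht.1]) _),
            abs_of_nonneg (pow_nonneg (by linarith [ht.2]) k)]
        have h1 : (b-s) ^ α ≤ (b-a) ^ α :=
          Real.rpow_le_rpow (by linarith [hs.2]) (by linarith [hs.1]) hα.le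
        have h2 : (b-s)^k ≤ (b-a)^k :=
          pow_le_pow_left₀ (by linarith [hs.2]) (by linarith [hs.1]) k
        have h3 := (Bc_pos α hα k).le
        have h4 := abs_nonneg (f s)
        have h5 : (0:ℝ) ≤ (b-s) ^ α := Real.rpow_nonneg (by linarith [hs.2]) _
        have h6 : (0:ℝ) ≤ (b-s)^k := pow_nonneg (by linarith [hs.2]) k
        have h7 : (0:ℝ) ≤ (b-a) ^ α := Real.rpow_nonneg (by linarith) _
        rw [hval, Real.norm_eq_abs,
          abs_of_nonneg (mul_nonneg (mul_nonneg (mul_nonneg h5 h6) h3) h4)]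
        calc (b-s) ^ α * (b-s)^k * Bc α k * |f s|
            ≤ (b-a) ^ α * (b-a)^k * Bc α k * |f s| := by
              apply mul_le_mul_of_nonneg_right _ h4
              apply mul_le_mul_of_nonneg_right _ h3
              exact mul_le_mul h1 h2 h6 h7
          _ = |f s| * ((b-a) ^ α * (b-a)^k * Bc α k) := by ring
  have hswap := MeasureTheory.integral_integral_swap (f := F) hint
  calc ∫ t, (b-t)^k * (∫ s in Ioo a t, (t-s) ^ (α-1) * f s) ∂(msr a b)
      = ∫ t, (∫ s, F s t ∂(msr a b)) ∂(msr a b) := by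
        apply integral_congr_ae
        filter_upwards [ae_mem_msr a b] with t ht
        rw [hFt t, msr, integral_indicator measurableSet_Iio,
          Measure.restrict_restrict measurableSet_Iio,
          show Iio t ∩ Ioo a b = Ioo a t by rw [inter_comm, Ioo_inter_Iio, min_eq_right ht.2.le]]
        rw [show (fun s => (t-s) ^ (α-1) * (b-t)^k * f s)
            = (fun s => (b-t)^k * ((t-s) ^ (α-1) * f s)) by funext s; ring,
          integral_const_mul]
    _ = ∫ s, (∫ t, F s t ∂(msr a b)) ∂(msr a b) := hswap.symm
    _ = ∫ s, (b-s) ^ α * (b-s)^k * Bc α k * f s ∂(msr a b) := by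
        apply integral_congr_ae
        filter_upwards [ae_mem_msr a b] with s hs
        rw [show (fun t => F s t) = (Ioi s).indicator (fun t => (t-s) ^ (α-1) * (b-t)^k * f s)
          from hFs s]
        exact inner_ind_left a b α hα k hs (f s) _ (fun t _ => rfl)

lemma fubini_right (a b α : ℝ) (hab : a < b) (hα : 0 < α) (k : ℕ) (f : ℝ → ℝ)
    (hm : Measurable f) (hfi : Integrable f (msr a b)) :
    ∫ t, (t-a)^k * (∫ s in Ioo t b, (s-t) ^ (α-1) * f s) ∂(msr a b)
      = ∫ s, (s-a) ^ α * (s-a)^k * Bc α k * f s ∂(msr a b) := by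
  set F : ℝ → ℝ → ℝ := fun s t =>
    Set.indicator {p : ℝ × ℝ | p.2 < p.1}
      (fun p => (p.1-p.2) ^ (α-1) * (p.2-a)^k * f p.1) (s, t) with hF
  have hmeasF : Measurable (Function.uncurry F) := by
    apply Measurable.indicator
    · apply Measurable.mul
      · apply Measurable.mul
        · fun_prop
        · fun_prop
      · exact hm.comp measurable_fst
    · exact measurableSet_lt measurable_snd measurable_fst
  have hFs : ∀ s : ℝ, (fun t => F s t)
      = (Iio s).indicator (fun t => (s-t) ^ (α-1) * (t-a)^k * f s) := by
    intro s; funext t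
    simp only [hF, Set.indicator_apply, Set.mem_setOf_eq, Set.mem_Iio]
  have hFt : ∀ t : ℝ, (fun s => F s t)
      = (Ioi t).indicator (fun s => (s-t) ^ (α-1) * (t-a)^k * f s) := by
    intro t; funext s
    simp only [hF, Set.indicator_apply, Set.mem_setOf_eq, Set.mem_Ioi]
  have hint : Integrable (Function.uncurry F) ((msr a b).prod (msr a b)) := by
    rw [integrable_prod_iff hmeasF.aestronglyMeasurable]
    constructor
    · filter_upwards [ae_mem_msr a b] with s hs
      show Integrable (fun t => F s t) (msr a b)
      rw [hFs s, msr, integrable_indicator_iff measurableSet_Iio]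
      unfold IntegrableOn
      rw [Measure.restrict_restrict measurableSet_Iio,
        show Iio s ∩ Ioo a b = Ioo a s by rw [inter_comm, Ioo_inter_Iio, min_eq_right hs.2.le]]
      exact (right_inner α hα k hs.1).1.mul_const (f s)
    · apply Integrable.mono' ((hfi.abs.mul_const ((b-a) ^ α * (b-a)^k * Bc α k)))
      · exact (hmeasF.norm.stronglyMeasurable.integral_prod_right').aestronglyMeasurable
      · filter_upwards [ae_mem_msr a b] with s hs
        show ‖∫ t, ‖F s t‖ ∂(msr a b)‖ ≤ _
        have hval : ∫ t, ‖F s t‖ ∂(msr a b) = (s-a) ^ α * (s-a)^k * Bc α k * |f s| := by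
          have : (fun t => ‖F s t‖)
              = (Iio s).indicator (fun t => ‖(s-t) ^ (α-1) * (t-a)^k * f s‖) := by
            funext t
            rw [show ‖F s t‖ = ‖(fun u => F s u) t‖ from rfl, hFs s,
              norm_indicator_eq_indicator_norm]
          rw [this]
          apply inner_ind_right a b α hα k hs
          intro t ht
          rw [Real.norm_eq_abs, abs_mul, abs_mul,
            abs_of_nonneg (Real.rpow_nonneg (by linarith [ht.2]) _),
            abs_of_nonneg (pow_nonneg (by linarith [ht.1]) k)]
        have h1 : (s-a) ^ α ≤ (b-a) ^ α :=
          Real.rpow_le_rpow (by linarith [hs.1]) (by linarith [hs.2]) hα.le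
        have h2 : (s-a)^k ≤ (b-a)^k :=
          pow_le_pow_left₀ (by linarith [hs.1]) (by linarith [hs.2]) k
        have h3 := (Bc_pos α hα k).le
        have h4 := abs_nonneg (f s)
        have h5 : (0:ℝ) ≤ (s-a) ^ α := Real.rpow_nonneg (by linarith [hs.1]) _
        have h6 : (0:ℝ) ≤ (s-a)^k := pow_nonneg (by linarith [hs.1]) k
        have h7 : (0:ℝ) ≤ (b-a) ^ α := Real.rpow_nonneg (by linarith) _
        rw [hval, Real.norm_eq_abs,
          abs_of_nonneg (mul_nonneg (mul_nonneg (mul_nonneg h5 h6) h3) h4)]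
        calc (s-a) ^ α * (s-a)^k * Bc α k * |f s|
            ≤ (b-a) ^ α * (b-a)^k * Bc α k * |f s| := by
              apply mul_le_mul_of_nonneg_right _ h4
              apply mul_le_mul_of_nonneg_right _ h3
              exact mul_le_mul h1 h2 h6 h7
          _ = |f s| * ((b-a) ^ α * (b-a)^k * Bc α k) := by ring
  have hswap := MeasureTheory.integral_integral_swap (f := F) hint
  calc ∫ t, (t-a)^k * (∫ s in Ioo t b, (s-t) ^ (α-1) * f s) ∂(msr a b)
      = ∫ t, (∫ s, F s t ∂(msr a b)) ∂(msr a b) := by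
        apply integral_congr_ae
        filter_upwards [ae_mem_msr a b] with t ht
        rw [hFt t, msr, integral_indicator measurableSet_Ioi,
          Measure.restrict_restrict measurableSet_Ioi,
          show Ioi t ∩ Ioo a b = Ioo t b by rw [inter_comm, Ioo_inter_Ioi, max_eq_right ht.1.le]]
        rw [show (fun s => (s-t) ^ (α-1) * (t-a)^k * f s)
            = (fun s => (t-a)^k * ((s-t) ^ (α-1) * f s)) by funext s; ring,
          integral_const_mul]
    _ = ∫ s, (∫ t, F s t ∂(msr a b)) ∂(msr a b) := hswap.symm
    _ = ∫ s, (s-a) ^ α * (s-a)^k * Bc α k * f s ∂(msr a b) := by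
        apply integral_congr_ae
        filter_upwards [ae_mem_msr a b] with s hs
        rw [show (fun t => F s t) = (Iio s).indicator (fun t => (s-t) ^ (α-1) * (t-a)^k * f s)
          from hFs s]
        exact inner_ind_right a b α hα k hs (f s) _ (fun t _ => rfl)

lemma cont_mul_integrable (a b : ℝ) (G h : ℝ → ℝ) (hG : Continuous G)
    (hi : Integrable h (msr a b)) : Integrable (fun x => G x * h x) (msr a b) := by
  obtain ⟨C, hC⟩ := (isCompact_Icc (a := a) (b := b)).exists_bound_of_continuousOn
    hG.continuousOn
  exact hi.bdd_mul (hG.aestronglyMeasurable) (by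
    filter_upwards [ae_mem_msr a b] with x hx
    exact hC x (Ioo_subset_Icc_self hx))

lemma poly_of_affine_moments (a b : ℝ) (h : ℝ → ℝ) (hi : Integrable h (msr a b))
    (c d : ℝ) (hd : d ≠ 0)
    (hm : ∀ k : ℕ, ∫ x, (c + d*x)^k * h x ∂(msr a b) = 0) :
    ∀ p : Polynomial ℝ, ∫ x, p.eval x * h x ∂(msr a b) = 0 := by
  intro p
  set q := p.comp (Polynomial.C (-(c/d)) + Polynomial.C d⁻¹ * Polynomial.X) with hq
  have hqe : ∀ x : ℝ, p.eval x = q.eval (c + d*x) := by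
    intro x
    rw [hq, Polynomial.eval_comp]
    congr 1
    simp only [Polynomial.eval_add, Polynomial.eval_mul, Polynomial.eval_C, Polynomial.eval_X]
    field_simp
    ring
  have hexp : ∀ x : ℝ, p.eval x * h x
      = ∑ i ∈ Finset.range (q.natDegree + 1), q.coeff i * ((c + d*x)^i * h x) := by
    intro x
    rw [hqe x, Polynomial.eval_eq_sum_range, Finset.sum_mul]
    congr 1; funext i; ring
  calc ∫ x, p.eval x * h x ∂(msr a b)
      = ∫ x, ∑ i ∈ Finset.range (q.natDegree + 1),
          q.coeff i * ((c + d*x)^i * h x) ∂(msr a b) := by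
        apply integral_congr_ae
        exact Filter.Eventually.of_forall hexp
    _ = ∑ i ∈ Finset.range (q.natDegree + 1),
          ∫ x, q.coeff i * ((c + d*x)^i * h x) ∂(msr a b) := by
        apply integral_finset_sum
        intro i _
        exact (cont_mul_integrable a b (fun x => (c + d*x)^i) h (by fun_prop) hi).const_mul _
    _ = 0 := by
        apply Finset.sum_eq_zero
        intro i _
        rw [integral_const_mul, hm i, mul_zero]

lemma vanish_of_poly_moments (a b : ℝ) (h : ℝ → ℝ) (hi : Integrable h (msr a b))
    (hm : ∀ p : Polynomial ℝ, ∫ x, p.eval x * h x ∂(msr a b) = 0) :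
    h =ᵐ[msr a b] 0 := by
  apply ae_eq_zero_of_integral_contDiff_smul_eq_zero (hi.locallyIntegrable)
  intro g hg hgsupp
  simp only [smul_eq_mul]
  have hgc : Continuous g := hg.continuous
  set I := ∫ x, g x * h x ∂(msr a b) with hI
  set C := ∫ x, |h x| ∂(msr a b) with hC
  have hC0 : 0 ≤ C := integral_nonneg (fun x => abs_nonneg _)
  have key : ∀ ε : ℝ, 0 < ε → |I| ≤ ε * C := by
    intro ε hε
    obtain ⟨p, hp⟩ := exists_polynomial_near_of_continuousOn a b g hgc.continuousOn ε hε
    have hgi := cont_mul_integrable a b g h hgc hi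
    have hpi : Integrable (fun x => Polynomial.eval x p * h x) (msr a b) :=
      cont_mul_integrable a b (fun x => Polynomial.eval x p) h (by fun_prop) hi
    have hIeq : I = ∫ x, (g x - Polynomial.eval x p) * h x ∂(msr a b) := by
      rw [hI]
      have h2 : (fun x => (g x - Polynomial.eval x p) * h x)
          = fun x => g x * h x - Polynomial.eval x p * h x := by funext x; ring
      rw [h2, integral_sub hgi hpi, hm p, sub_zero]
    rw [hIeq]
    have habs : Integrable (fun x => |(g x - Polynomial.eval x p) * h x|) (msr a b) :=
      ((hgi.sub hpi).congr (Filter.Eventually.of_forall (fun x : ℝ => by simp only [Pi.sub_apply]; ring))).abs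
    calc |∫ x, (g x - Polynomial.eval x p) * h x ∂(msr a b)|
        ≤ ∫ x, |(g x - Polynomial.eval x p) * h x| ∂(msr a b) := by
          rw [← Real.norm_eq_abs]
          exact norm_integral_le_integral_norm _
      _ ≤ ∫ x, ε * |h x| ∂(msr a b) := by
          apply integral_mono_ae habs (hi.abs.const_mul ε)
          filter_upwards [ae_mem_msr a b] with x hx
          rw [abs_mul]
          apply mul_le_mul_of_nonneg_right _ (abs_nonneg _)
          rw [abs_sub_comm]
          exact (hp x (Ioo_subset_Icc_self hx)).le
      _ = ε * C := by rw [integral_const_mul]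
  by_contra hne
  have hI0 : 0 < |I| := by
    rcases eq_or_ne I 0 with h0 | h0
    · exact absurd h0 hne
    · exact abs_pos.mpr h0
  have hk := key (|I| / (2 * (C + 1))) (by positivity)
  rw [div_mul_eq_mul_div, le_div_iff₀ (by positivity)] at hk
  nlinarith



lemma key_left (a b α : ℝ) (hab : a < b) (hα : 0 < α) (f : ℝ → ℝ) (hm : Measurable f)
    (hfi : Integrable f (msr a b)) (h0 : leftFrac a α f =ᵐ[msr a b] 0) :
    f =ᵐ[msr a b] 0 := by
  have hΓ : (Real.Gamma α)⁻¹ ≠ 0 := inv_ne_zero (Real.Gamma_pos_of_pos hα).ne'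
  have hinner : ∀ᵐ t ∂(msr a b), (∫ s in Ioo a t, (t-s) ^ (α-1) * f s) = 0 := by
    filter_upwards [h0] with t ht
    have h1 : (Real.Gamma α)⁻¹ * ∫ s in Ioo a t, (t-s) ^ (α-1) * f s = 0 := ht
    rcases mul_eq_zero.mp h1 with h | h
    · exact absurd h hΓ
    · exact h
  have mom0 : ∀ k : ℕ, ∫ s, (b-s) ^ α * (b-s)^k * Bc α k * f s ∂(msr a b) = 0 := by
    intro k
    rw [← fubini_left a b α hab hα k f hm hfi]
    have he : (fun t => (b-t)^k * (∫ s in Ioo a t, (t-s) ^ (α-1) * f s))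
        =ᵐ[msr a b] (fun _ => (0:ℝ)) := by
      filter_upwards [hinner] with t ht
      rw [ht, mul_zero]
    rw [integral_congr_ae he, integral_zero]
  have hh_int : Integrable (fun x => (b-x) ^ α * f x) (msr a b) := by
    apply hfi.bdd_mul (Measurable.aestronglyMeasurable (by fun_prop))
    · filter_upwards [ae_mem_msr a b] with x hx
      rw [Real.norm_eq_abs, abs_of_nonneg (Real.rpow_nonneg (by linarith [hx.2]) _)]
      exact Real.rpow_le_rpow (show (0:ℝ) ≤ b - x by linarith [hx.2])
        (show b - x ≤ b - a by linarith [hx.1]) hα.le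
  have hmom : ∀ k : ℕ, ∫ x, (b + (-1)*x)^k * ((b-x) ^ α * f x) ∂(msr a b) = 0 := by
    intro k
    have h1 := mom0 k
    have h2 : (fun s => (b-s) ^ α * (b-s)^k * Bc α k * f s)
        = fun s => Bc α k * ((b + (-1)*s)^k * ((b-s) ^ α * f s)) := by
      funext s; ring_nf
    rw [h2, integral_const_mul] at h1
    rcases mul_eq_zero.mp h1 with h | h
    · exact absurd h (Bc_pos α hα k).ne'
    · exact h
  have hzero := vanish_of_poly_moments a b _ hh_int
    (poly_of_affine_moments a b _ hh_int b (-1) (by norm_num) hmom)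
  filter_upwards [hzero, ae_mem_msr a b] with x h1 h2
  have hb : (0:ℝ) < (b-x) ^ α := Real.rpow_pos_of_pos (by linarith [h2.2]) _
  have h3 : (b-x) ^ α * f x = 0 := h1
  rcases mul_eq_zero.mp h3 with h | h
  · exact absurd h hb.ne'
  · exact h

lemma key_right (a b α : ℝ) (hab : a < b) (hα : 0 < α) (f : ℝ → ℝ) (hm : Measurable f)
    (hfi : Integrable f (msr a b)) (h0 : rightFrac b α f =ᵐ[msr a b] 0) :
    f =ᵐ[msr a b] 0 := by
  have hΓ : (Real.Gamma α)⁻¹ ≠ 0 := inv_ne_zero (Real.Gamma_pos_of_pos hα).ne'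
  have hinner : ∀ᵐ t ∂(msr a b), (∫ s in Ioo t b, (s-t) ^ (α-1) * f s) = 0 := by
    filter_upwards [h0] with t ht
    have h1 : (Real.Gamma α)⁻¹ * ∫ s in Ioo t b, (s-t) ^ (α-1) * f s = 0 := ht
    rcases mul_eq_zero.mp h1 with h | h
    · exact absurd h hΓ
    · exact h
  have mom0 : ∀ k : ℕ, ∫ s, (s-a) ^ α * (s-a)^k * Bc α k * f s ∂(msr a b) = 0 := by
    intro k
    rw [← fubini_right a b α hab hα k f hm hfi]
    have he : (fun t => (t-a)^k * (∫ s in Ioo t b, (s-t) ^ (α-1) * f s))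
        =ᵐ[msr a b] (fun _ => (0:ℝ)) := by
      filter_upwards [hinner] with t ht
      rw [ht, mul_zero]
    rw [integral_congr_ae he, integral_zero]
  have hh_int : Integrable (fun x => (x-a) ^ α * f x) (msr a b) := by
    apply hfi.bdd_mul (Measurable.aestronglyMeasurable (by fun_prop))
    · filter_upwards [ae_mem_msr a b] with x hx
      rw [Real.norm_eq_abs, abs_of_nonneg (Real.rpow_nonneg (by linarith [hx.1]) _)]
      exact Real.rpow_le_rpow (show (0:ℝ) ≤ x - a by linarith [hx.1])
        (show x - a ≤ b - a by linarith [hx.2]) hα.le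
  have hmom : ∀ k : ℕ, ∫ x, (-a + 1*x)^k * ((x-a) ^ α * f x) ∂(msr a b) = 0 := by
    intro k
    have h1 := mom0 k
    have h2 : (fun s => (s-a) ^ α * (s-a)^k * Bc α k * f s)
        = fun s => Bc α k * ((-a + 1*s)^k * ((s-a) ^ α * f s)) := by
      funext s; ring_nf
    rw [h2, integral_const_mul] at h1
    rcases mul_eq_zero.mp h1 with h | h
    · exact absurd h (Bc_pos α hα k).ne'
    · exact h
  have hzero := vanish_of_poly_moments a b _ hh_int
    (poly_of_affine_moments a b _ hh_int (-a) 1 (by norm_num) hmom)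
  filter_upwards [hzero, ae_mem_msr a b] with x h1 h2
  have hb : (0:ℝ) < (x-a) ^ α := Real.rpow_pos_of_pos (by linarith [h2.1]) _
  have h3 : (x-a) ^ α * f x = 0 := h1
  rcases mul_eq_zero.mp h3 with h | h
  · exact absurd h hb.ne'
  · exact h

theorem frac_inj_main (a b α : ℝ) (hab : a < b) (hα : 0 < α)
    (f : ℝ → ℝ) (hf : MemLp f 2 (msr a b)) :
    (leftFrac a α f =ᵐ[msr a b] 0 → f =ᵐ[msr a b] 0) ∧
    (rightFrac b α f =ᵐ[msr a b] 0 → f =ᵐ[msr a b] 0) := by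
  have hfi : Integrable f (msr a b) := hf.integrable one_le_two
  set f' := hf.1.mk f with hf'def
  have hsm : StronglyMeasurable f' := hf.1.stronglyMeasurable_mk
  have hae : f =ᵐ[msr a b] f' := hf.1.ae_eq_mk
  have hfi' : Integrable f' (msr a b) := hfi.congr hae
  constructor
  · intro h0
    have hsub : ∀ t : ℝ, t ≤ b →
        (∫ s in Ioo a t, (t-s) ^ (α-1) * f s) = ∫ s in Ioo a t, (t-s) ^ (α-1) * f' s := by
      intro t ht
      apply integral_congr_ae
      have h1 : f =ᵐ[volume.restrict (Ioo a t)] f' :=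
        ae_restrict_of_ae_restrict_of_subset (Ioo_subset_Ioo le_rfl ht) hae
      filter_upwards [h1] with s hs
      rw [hs]
    have h0' : leftFrac a α f' =ᵐ[msr a b] 0 := by
      filter_upwards [h0, ae_mem_msr a b] with t ht hmem
      show (Real.Gamma α)⁻¹ * ∫ s in Ioo a t, (t-s) ^ (α-1) * f' s = 0
      rw [← hsub t hmem.2.le]
      exact ht
    exact hae.trans (key_left a b α hab hα f' hsm.measurable hfi' h0')
  · intro h0
    have hsub : ∀ t : ℝ, a ≤ t →
        (∫ s in Ioo t b, (s-t) ^ (α-1) * f s) = ∫ s in Ioo t b, (s-t) ^ (α-1) * f' s := by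
      intro t ht
      apply integral_congr_ae
      have h1 : f =ᵐ[volume.restrict (Ioo t b)] f' :=
        ae_restrict_of_ae_restrict_of_subset (Ioo_subset_Ioo ht le_rfl) hae
      filter_upwards [h1] with s hs
      rw [hs]
    have h0' : rightFrac b α f' =ᵐ[msr a b] 0 := by
      filter_upwards [h0, ae_mem_msr a b] with t ht hmem
      show (Real.Gamma α)⁻¹ * ∫ s in Ioo t b, (s-t) ^ (α-1) * f' s = 0
      rw [← hsub t hmem.1.le]
      exact ht
    exact hae.trans (key_right a b α hab hα f' hsm.measurable hfi' h0')

theorem fractional_integrals_injective_on_L2 (a b α : ℝ) (hab : a < b) (hα : 0 < α)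
    (f : ℝ → ℝ) (hf : MemLp f 2 (msr a b)) :
    (leftFrac a α f =ᵐ[msr a b] 0 → f =ᵐ[msr a b] 0) ∧
    (rightFrac b α f =ᵐ[msr a b] 0 → f =ᵐ[msr a b] 0) :=
  frac_inj_main a b α hab hα f hf
end

section
/- Let a < b be real numbers and let α > 0. The range of the left Liouville fractional integral operator I_{a+}^α acting on L²(a,b) is dense in L²(a,b), and likewise the range of the right Liouville fractional integral operator I_{b-}^α acting on L²(a,b) is dense in L²(a,b). -/
open MeasureTheory Set intervalIntegral
open scoped NNReal ENNReal RealInnerProductSpace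

section Aux
variable {a b : ℝ}

lemma msr_finite_s2 (a b : ℝ) : IsFiniteMeasure (msr a b) := by
  constructor
  rw [msr, Measure.restrict_apply_univ]
  exact measure_Ioo_lt_top

lemma msr_weaklyRegular (a b : ℝ) : (msr a b).WeaklyRegular :=
  MeasureTheory.Measure.WeaklyRegular.restrict_of_measure_ne_top measure_Ioo_lt_top.ne

lemma msr_ae (a b : ℝ) : ∀ᵐ t ∂(msr a b), t ∈ Ioo a b :=
  ae_restrict_mem measurableSet_Ioo

lemma mem2 {f : ℝ → ℝ} (hf : Continuous f) : MemLp f 2 (msr a b) := by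
  have : IsFiniteMeasure (msr a b) := msr_finite_s2 a b
  obtain ⟨C, hC⟩ : ∃ C, ∀ x ∈ Icc a b, ‖f x‖ ≤ C :=
    isCompact_Icc.exists_bound_of_continuousOn hf.continuousOn
  exact MemLp.of_bound hf.aestronglyMeasurable C <|
    (msr_ae a b).mono fun t ht => hC t ⟨ht.1.le, ht.2.le⟩

lemma toLp_congr_fun {f g : ℝ → ℝ} (hf : MemLp f 2 (msr a b)) (hg : MemLp g 2 (msr a b))
    (h : f = g) : hf.toLp f = hg.toLp g := by subst h; rfl

end Aux

lemma mem2_mul {f : ℝ → ℝ} (hf : MemLp f 2 (msr a b)) {g : ℝ → ℝ} (hg : Continuous g) :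
    MemLp (fun t => g t * f t) 2 (msr a b) := by
  obtain ⟨C, hC⟩ : ∃ C, ∀ x ∈ Icc a b, ‖g x‖ ≤ C :=
    isCompact_Icc.exists_bound_of_continuousOn hg.continuousOn
  refine MemLp.of_le_mul (c := C) hf (hg.aestronglyMeasurable.mul hf.aestronglyMeasurable) ?_
  filter_upwards [msr_ae a b] with t ht
  rw [norm_mul]
  exact mul_le_mul_of_nonneg_right (hC t ⟨ht.1.le, ht.2.le⟩) (norm_nonneg _)

noncomputable def betaC (α : ℝ) (n : ℕ) : ℝ := ∫ u in (0:ℝ)..1, (1 - u) ^ (α - 1) * u ^ n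


lemma betaInt' {α : ℝ} (hα : 0 < α) (n : ℕ) :
    IntervalIntegrable (fun u : ℝ => (1 - u) ^ (α - 1) * u ^ n) volume 0 1 := by
  have h1 : IntervalIntegrable (fun u : ℝ => (1 - u) ^ (α - 1)) volume 0 1 := by
    have := (intervalIntegrable_rpow' (a := 0) (b := 1) (r := α - 1)
      (by linarith)).comp_sub_left 1
    simpa using this.symm
  exact h1.mul_continuousOn (continuousOn_pow n)

lemma betaC_pos {α : ℝ} (hα : 0 < α) (n : ℕ) : 0 < betaC α n := by
  apply intervalIntegral_pos_of_pos_on (betaInt' hα n) _ one_pos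
  intro x hx
  exact mul_pos (Real.rpow_pos_of_pos (by linarith [hx.2]) _) (pow_pos hx.1 n)

/-- Integrability of the left kernel times monomial. -/
lemma leftInt {α t a : ℝ} (hα : 0 < α) (ht : a < t) (n : ℕ) :
    IntervalIntegrable (fun s : ℝ => (t - s) ^ (α - 1) * (s - a) ^ n) volume a t := by
  have h1 : IntervalIntegrable (fun s : ℝ => (t - s) ^ (α - 1)) volume a t := by
    have := (intervalIntegrable_rpow' (a := 0) (b := t - a) (r := α - 1)
      (by linarith)).comp_sub_left t
    simpa using this.symm
  exact h1.mul_continuousOn (by fun_prop)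

lemma rightInt {α t b : ℝ} (hα : 0 < α) (ht : t < b) (n : ℕ) :
    IntervalIntegrable (fun s : ℝ => (s - t) ^ (α - 1) * (b - s) ^ n) volume t b := by
  have h1 : IntervalIntegrable (fun s : ℝ => (s - t) ^ (α - 1)) volume t b := by
    have := (intervalIntegrable_rpow' (a := 0) (b := b - t) (r := α - 1)
      (by linarith)).comp_sub_right t
    simpa using this
  exact h1.mul_continuousOn (by fun_prop)

lemma core_moment {α L : ℝ} (hα : 0 < α) (hL : 0 < L) (n : ℕ) :
    ∫ u in (0:ℝ)..1, (L - (L * u)) ^ (α - 1) * (L * u) ^ n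
      = L ^ (α - 1) * L ^ (n : ℕ) * betaC α n := by
  have h1 : ∀ u ∈ uIcc (0:ℝ) 1,
      (L - L * u) ^ (α - 1) * (L * u) ^ n
        = L ^ (α - 1) * L ^ (n:ℕ) * ((1 - u) ^ (α - 1) * u ^ n) := by
    intro u hu
    rw [uIcc_of_le (by norm_num)] at hu
    have h2 : L - L * u = L * (1 - u) := by ring
    rw [h2, Real.mul_rpow hL.le (by linarith [hu.2]), mul_pow]
    ring
  rw [integral_congr h1]
  rw [intervalIntegral.integral_const_mul]
  rfl

lemma left_moment {a α : ℝ} (hα : 0 < α) {t : ℝ} (ht : a < t) (n : ℕ) :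
    ∫ s in Ioo a t, (t - s) ^ (α - 1) * (s - a) ^ n
      = (t - a) ^ (α + n) * betaC α n := by
  set L := t - a with hLdef
  have hL : 0 < L := by simp [hLdef]; linarith
  have hIoo : ∫ s in Ioo a t, (t - s) ^ (α - 1) * (s - a) ^ n
      = ∫ s in a..t, (t - s) ^ (α - 1) * (s - a) ^ n := by
    rw [intervalIntegral.integral_of_le ht.le, MeasureTheory.integral_Ioc_eq_integral_Ioo]
  have hsub := integral_comp_mul_add (a := (0:ℝ)) (b := 1)
    (f := fun s => (t - s) ^ (α - 1) * (s - a) ^ n) (c := L) hL.ne' a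
  have hb0 : L * 0 + a = a := by ring
  have hb1 : L * 1 + a = t := by simp [hLdef]
  rw [hb0, hb1] at hsub
  have hcore : ∫ u in (0:ℝ)..1,
      (t - (L * u + a)) ^ (α - 1) * (L * u + a - a) ^ n
        = L ^ (α - 1) * L ^ (n : ℕ) * betaC α n := by
    have : ∀ u : ℝ, (t - (L * u + a)) = L - L * u := fun u => by rw [hLdef]; ring
    simp only [this, add_sub_cancel_right]
    exact core_moment hα hL n
  rw [hcore] at hsub
  have : (∫ s in a..t, (t - s) ^ (α - 1) * (s - a) ^ n)
      = L * (L ^ (α - 1) * L ^ (n : ℕ) * betaC α n) := by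
    rw [smul_eq_mul] at hsub
    field_simp at hsub
    linarith [hsub]
  rw [hIoo, this]
  have hpow : L * (L ^ (α - 1) * L ^ (n : ℕ)) = L ^ (α + n) := by
    rw [← Real.rpow_natCast L n, ← Real.rpow_add hL, mul_comm, ← Real.rpow_add_one hL.ne']
    congr 1
    ring
  calc L * (L ^ (α - 1) * L ^ (n:ℕ) * betaC α n)
      = L * (L ^ (α - 1) * L ^ (n:ℕ)) * betaC α n := by ring
    _ = L ^ (α + n) * betaC α n := by rw [hpow]

lemma right_moment {b α : ℝ} (hα : 0 < α) {t : ℝ} (ht : t < b) (n : ℕ) :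
    ∫ s in Ioo t b, (s - t) ^ (α - 1) * (b - s) ^ n
      = (b - t) ^ (α + n) * betaC α n := by
  set L := b - t with hLdef
  have hL : 0 < L := by simp [hLdef]; linarith
  have hIoo : ∫ s in Ioo t b, (s - t) ^ (α - 1) * (b - s) ^ n
      = ∫ s in t..b, (s - t) ^ (α - 1) * (b - s) ^ n := by
    rw [intervalIntegral.integral_of_le ht.le, MeasureTheory.integral_Ioc_eq_integral_Ioo]
  have hsub := integral_comp_mul_add (a := (0:ℝ)) (b := 1)
    (f := fun s => (s - t) ^ (α - 1) * (b - s) ^ n) (c := -L) (neg_ne_zero.2 hL.ne') b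
  have hb0 : -L * 0 + b = b := by ring
  have hb1 : -L * 1 + b = t := by rw [hLdef]; ring
  rw [hb0, hb1] at hsub
  have hcore : ∫ u in (0:ℝ)..1,
      (-L * u + b - t) ^ (α - 1) * (b - (-L * u + b)) ^ n
        = L ^ (α - 1) * L ^ (n : ℕ) * betaC α n := by
    have h1 : ∀ u : ℝ, -L * u + b - t = L - L * u := fun u => by rw [hLdef]; ring
    have h2 : ∀ u : ℝ, b - (-L * u + b) = L * u := fun u => by ring
    simp only [h1, h2]
    exact core_moment hα hL n
  rw [hcore, intervalIntegral.integral_symm t b] at hsub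
  have : (∫ s in t..b, (s - t) ^ (α - 1) * (b - s) ^ n)
      = L * (L ^ (α - 1) * L ^ (n : ℕ) * betaC α n) := by
    rw [smul_eq_mul] at hsub
    field_simp at hsub
    linarith [hsub]
  rw [hIoo, this]
  have hpow : L * (L ^ (α - 1) * L ^ (n : ℕ)) = L ^ (α + n) := by
    rw [← Real.rpow_natCast L n, ← Real.rpow_add hL, mul_comm, ← Real.rpow_add_one hL.ne']
    congr 1
    ring
  calc L * (L ^ (α - 1) * L ^ (n:ℕ) * betaC α n)
      = L * (L ^ (α - 1) * L ^ (n:ℕ)) * betaC α n := by ring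
    _ = L ^ (α + n) * betaC α n := by rw [hpow]

/-- The monomial `t ↦ t^n` as an element of `L²(a,b)`. -/
noncomputable def monLp (a b : ℝ) (n : ℕ) : Lp ℝ 2 (msr a b) :=
  (mem2 (continuous_pow n)).toLp _

lemma poly_mem_span (a b : ℝ) (p : Polynomial ℝ) :
    (mem2 p.continuous).toLp (fun t : ℝ => Polynomial.eval t p)
      ∈ Submodule.span ℝ (Set.range (monLp a b)) := by
  induction p using Polynomial.induction_on' with
  | add p q hp hq =>
      rw [toLp_congr_fun (mem2 (p + q).continuous)
        ((mem2 p.continuous).add (mem2 q.continuous))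
        (funext fun t => by simp [Polynomial.eval_add]), MemLp.toLp_add (hf := mem2 p.continuous) (hg := mem2 q.continuous)]
      exact Submodule.add_mem _ hp hq
  | monomial n c =>
      rw [toLp_congr_fun (mem2 (Polynomial.monomial n c).continuous)
        ((mem2 (continuous_pow n)).const_smul c)
        (funext fun t => by simp [Polynomial.eval_monomial]), MemLp.toLp_const_smul (hf := mem2 (continuous_pow n))]
      exact Submodule.smul_mem _ _ (Submodule.subset_span ⟨n, rfl⟩)

lemma polyDense (a b : ℝ) :
    (Submodule.span ℝ (Set.range (monLp a b))).topologicalClosure = ⊤ := by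
  haveI := msr_finite_s2 a b
  haveI := msr_weaklyRegular a b
  rw [← Submodule.dense_iff_topologicalClosure_eq_top]
  rw [Metric.dense_iff]
  intro f ε hε
  set V : ℝ := ((msr a b) univ).toReal ^ (2⁻¹ : ℝ) with hV
  have hV0 : 0 ≤ V := Real.rpow_nonneg ENNReal.toReal_nonneg _
  set δ : ℝ := (ε / 3) / (V + 1) with hδ
  have hδ0 : 0 < δ := by positivity
  obtain ⟨g, hg, gmem⟩ := (Lp.memLp f).exists_boundedContinuous_eLpNorm_sub_le
    (p := 2) (μ := msr a b) (E := ℝ) (by norm_num) (ε := ENNReal.ofReal (ε / 3))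
    (by simp [ENNReal.ofReal_eq_zero]; positivity)
  obtain ⟨q, hq⟩ := exists_polynomial_near_of_continuousOn a b g
    g.continuous.continuousOn δ hδ0
  have qmem : MemLp (fun t : ℝ => Polynomial.eval t q) 2 (msr a b) := mem2 q.continuous
  refine ⟨qmem.toLp _, ?_, ?_⟩
  swap
  · have := poly_mem_span a b q
    exact this
  rw [Metric.mem_ball]
  have hPcoe : ⇑(qmem.toLp _) =ᵐ[msr a b] fun t : ℝ => Polynomial.eval t q :=
    MemLp.coeFn_toLp qmem
  have d1 : dist f (gmem.toLp g) ≤ ε / 3 := by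
    rw [Lp.dist_def]
    have : eLpNorm (⇑f - ⇑(gmem.toLp g)) 2 (msr a b) = eLpNorm (⇑f - ⇑g) 2 (msr a b) :=
      eLpNorm_congr_ae ((Filter.EventuallyEq.refl _ _).sub (MemLp.coeFn_toLp gmem))
    rw [this]
    exact ENNReal.toReal_le_of_le_ofReal (by positivity) hg
  have d2 : dist (gmem.toLp g) (qmem.toLp _) < ε / 3 := by
    rw [Lp.dist_def]
    have hb : ∀ᵐ t ∂(msr a b), ‖(⇑(gmem.toLp g) - ⇑(qmem.toLp _)) t‖ ≤ δ := by
      filter_upwards [msr_ae a b, MemLp.coeFn_toLp gmem, hPcoe] with t ht h1 h2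
      simp only [Pi.sub_apply, h1, h2]
      rw [Real.norm_eq_abs, abs_sub_comm]
      exact (hq t ⟨ht.1.le, ht.2.le⟩).le
    have hle := eLpNorm_le_of_ae_bound (p := 2) (μ := msr a b) hb
    calc (eLpNorm (⇑(gmem.toLp g) - ⇑(qmem.toLp _)) 2 (msr a b)).toReal
        ≤ (((msr a b) univ) ^ ((2:ℝ≥0∞).toReal)⁻¹ * ENNReal.ofReal δ).toReal :=
          ENNReal.toReal_mono (ENNReal.mul_ne_top
            (ENNReal.rpow_ne_top_of_nonneg (by norm_num) (measure_ne_top _ _))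
            ENNReal.ofReal_ne_top) hle
      _ = V * δ := by
          rw [ENNReal.toReal_mul, ENNReal.toReal_ofReal hδ0.le, hV,
            ENNReal.toReal_rpow]
          norm_num
      _ < ε / 3 := by
          have h1 : V / (V + 1) < 1 := (div_lt_one (by positivity)).2 (by linarith)
          calc V * (ε / 3 / (V + 1)) = (ε / 3) * (V / (V + 1)) := by ring
            _ < (ε / 3) * 1 := by
                exact mul_lt_mul_of_pos_left h1 (by positivity)
            _ = ε / 3 := by ring
  rw [dist_comm]
  calc dist f (qmem.toLp _)
      ≤ dist f (gmem.toLp g) + dist (gmem.toLp g) (qmem.toLp _) := dist_triangle _ _ _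
    _ < ε / 3 + ε / 3 := by linarith
    _ < ε := by linarith

lemma pow_expand (α v H σ c : ℝ) (hv : 0 < v) (n : ℕ) :
    (σ * v + c) ^ n * (v ^ α * H)
      = ∑ k ∈ Finset.range (n + 1),
          (σ ^ k * c ^ (n - k) * (n.choose k : ℝ)) * (v ^ (α + (k : ℝ)) * H) := by
  rw [add_pow, Finset.sum_mul]
  refine Finset.sum_congr rfl fun k hk => ?_
  rw [Real.rpow_add hv, Real.rpow_natCast, mul_pow]
  ring

lemma ortho_zero {a b α : ℝ} (hab : a < b) (hα : 0 < α) (σ c : ℝ) (hσ : σ * σ = 1)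
    (hv : ∀ t ∈ Ioo a b, 0 < σ * (t - c))
    (h : Lp ℝ 2 (msr a b))
    (hm : ∀ n : ℕ, ∫ t, (σ * (t - c)) ^ (α + (n : ℝ)) * h t ∂(msr a b) = 0) :
    h = 0 := by
  haveI := msr_finite_s2 a b
  have hint : Integrable (⇑h) (msr a b) := (Lp.memLp h).integrable (by norm_num)
  -- bound on the linear factor
  set M : ℝ := |a| + |b| + |c| + 1 with hM
  have hMb : ∀ t ∈ Ioo a b, σ * (t - c) ≤ M := by
    intro t ht
    have h1 : σ * (t - c) ≤ |σ * (t - c)| := le_abs_self _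
    have h2 : |σ| = 1 := by
      rcases mul_self_eq_one_iff.1 hσ with h | h <;> simp [h]
    have h3 : |σ * (t - c)| = |t - c| := by rw [abs_mul, h2, one_mul]
    have h4 : |t - c| ≤ |t| + |c| := abs_sub _ _
    have h5 : |t| ≤ |a| + |b| := by
      rcases abs_cases a with ⟨_, _⟩ | ⟨_, _⟩ <;> rcases abs_cases b with ⟨_, _⟩ | ⟨_, _⟩ <;>
        rcases abs_cases t with ⟨h6, _⟩ | ⟨h6, _⟩ <;>
        nlinarith [ht.1, ht.2]
    nlinarith
  -- continuity of the weights
  have wcont : ∀ β : ℝ, 0 ≤ β → Continuous (fun t : ℝ => (σ * (t - c)) ^ β) := by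
    intro β hβ
    exact (Real.continuous_rpow_const hβ).comp (by fun_prop)
  -- integrability of weighted h
  have int_vk : ∀ β : ℝ, 0 ≤ β →
      Integrable (fun t => (σ * (t - c)) ^ β * h t) (msr a b) := by
    intro β hβ
    refine hint.bdd_mul (c := M ^ β) ((wcont β hβ).aestronglyMeasurable) ?_
    filter_upwards [msr_ae a b] with t ht
    rw [Real.norm_eq_abs, abs_of_nonneg (Real.rpow_nonneg (hv t ht).le _)]
    exact Real.rpow_le_rpow (hv t ht).le (hMb t ht) hβ
  -- the weighted function
  set H : ℝ → ℝ := fun t => (σ * (t - c)) ^ α * h t with hHdef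
  have Hmem : MemLp H 2 (msr a b) := mem2_mul (Lp.memLp h) (wcont α hα.le)
  -- moments of H against monomials vanish
  have hmom : ∀ n : ℕ, ∫ t, t ^ n * H t ∂(msr a b) = 0 := by
    intro n
    have key : ∀ᵐ t ∂(msr a b), t ^ n * H t
        = ∑ k ∈ Finset.range (n + 1),
            (σ ^ k * c ^ (n - k) * (n.choose k : ℝ))
              * ((σ * (t - c)) ^ (α + (k : ℝ)) * h t) := by
      filter_upwards [msr_ae a b] with t ht
      have ht' : σ * (σ * (t - c)) + c = t := by linear_combination (t - c) * hσ
      have h1 : t ^ n = (σ * (σ * (t - c)) + c) ^ n := by rw [ht']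
      rw [hHdef]
      rw [h1]
      exact pow_expand α (σ * (t - c)) (h t) σ c (hv t ht) n
    rw [MeasureTheory.integral_congr_ae key]
    have hsum := integral_finset_sum (μ := msr a b) (Finset.range (n + 1))
      (f := fun (k : ℕ) (t : ℝ) => (σ ^ k * c ^ (n - k) * (n.choose k : ℝ))
          * ((σ * (t - c)) ^ (α + (k : ℝ)) * h t))
      (fun k _ => ((int_vk (α + (k : ℝ)) (add_nonneg hα.le (Nat.cast_nonneg k))).const_mul _))
    rw [hsum]
    refine Finset.sum_eq_zero fun k _ => ?_
    rw [MeasureTheory.integral_const_mul, hm k, mul_zero]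
  -- H is orthogonal to the span of monomials
  have Horth : Hmem.toLp H ∈ (Submodule.span ℝ (Set.range (monLp a b)))ᗮ := by
    rw [Submodule.mem_orthogonal']
    intro u hu
    induction hu using Submodule.span_induction with
    | mem x hx =>
        obtain ⟨n, rfl⟩ := hx
        have : ⟪Hmem.toLp H, monLp a b n⟫ = ∫ t, (Hmem.toLp H) t * (monLp a b n) t ∂(msr a b) := by
          rw [MeasureTheory.L2.inner_def]
          congr 1
          ext t; simp [mul_comm]
        rw [this, ← hmom n]
        apply MeasureTheory.integral_congr_ae
        filter_upwards [MemLp.coeFn_toLp Hmem, MemLp.coeFn_toLp (mem2 (continuous_pow n))]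
          with t h1 h2
        rw [h1]
        show H t * (monLp a b n) t = t ^ n * H t
        rw [show (monLp a b n) t = t ^ n from h2]
        ring
    | zero => exact inner_zero_right _
    | add x y _ _ hx hy => rw [inner_add_right, hx, hy, add_zero]
    | smul r x _ hx => rw [inner_smul_right, hx, mul_zero]
  rw [Submodule.topologicalClosure_eq_top_iff.1 (polyDense a b), Submodule.mem_bot] at Horth
  have hH0 : H =ᵐ[msr a b] 0 :=
    (MemLp.toLp_eq_toLp_iff Hmem MemLp.zero).1 (by rw [Horth, MemLp.toLp_zero])
  rw [Lp.eq_zero_iff_ae_eq_zero]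
  filter_upwards [hH0, msr_ae a b] with t h0 ht
  have hw : (σ * (t - c)) ^ α ≠ 0 := (Real.rpow_pos_of_pos (hv t ht) α).ne'
  have : (σ * (t - c)) ^ α * h t = 0 := h0
  exact (mul_eq_zero.1 this).resolve_left hw

lemma coeFn_sum_smul {μ : Measure ℝ} (s : Finset ℕ) (r : ℕ → ℝ) (u : ℕ → Lp ℝ 2 μ)
    (g : ℕ → ℝ → ℝ) (hu : ∀ n, ⇑(u n) =ᵐ[μ] g n) :
    ⇑(∑ n ∈ s, r n • u n) =ᵐ[μ] fun t => ∑ n ∈ s, r n * g n t := by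
  classical
  induction s using Finset.induction_on with
  | empty => simp only [Finset.sum_empty]; exact Lp.coeFn_zero ℝ 2 μ
  | @insert i s hi ih =>
      rw [Finset.sum_insert hi]
      refine (Lp.coeFn_add _ _).trans ?_
      have h1 : ⇑(r i • u i) =ᵐ[μ] fun t => r i * g i t :=
        (Lp.coeFn_smul (r i) (u i)).trans ((hu i).mono fun t ht => by simp [ht])
      filter_upwards [h1, ih] with t h1t h2t
      simp only [Pi.add_apply, h1t, h2t, Finset.sum_insert hi]

lemma left_dense {a b α : ℝ} (hab : a < b) (hα : 0 < α) :
    Dense {F : Lp ℝ 2 (msr a b) |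
      ∃ f : ℝ → ℝ, MemLp f 2 (msr a b) ∧
        (F : ℝ → ℝ) =ᵐ[msr a b] leftFrac a α f} := by
  classical
  have hΓ : Real.Gamma α ≠ 0 := (Real.Gamma_pos_of_pos hα).ne'
  have gmem : ∀ n : ℕ, MemLp (fun t : ℝ => (t - a) ^ (α + (n:ℝ))) 2 (msr a b) := fun n =>
    mem2 ((Real.continuous_rpow_const (by positivity)).comp (continuous_id.sub continuous_const))
  set G : ℕ → Lp ℝ 2 (msr a b) := fun n => (gmem n).toLp _ with hG
  have hGcoe : ∀ n, ⇑(G n) =ᵐ[msr a b] fun t : ℝ => (t - a) ^ (α + (n:ℝ)) := fun n =>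
    MemLp.coeFn_toLp _
  have Kdense : Dense ((Submodule.span ℝ (Set.range G) :
      Submodule ℝ (Lp ℝ 2 (msr a b))) : Set (Lp ℝ 2 (msr a b))) := by
    rw [Submodule.dense_iff_topologicalClosure_eq_top,
      Submodule.topologicalClosure_eq_top_iff, Submodule.eq_bot_iff]
    intro h hh
    refine ortho_zero hab hα 1 a (by ring)
      (fun t ht => by simpa using sub_pos.2 ht.1) h (fun n => ?_)
    have h0 : ⟪G n, h⟫ = 0 :=
      (Submodule.mem_orthogonal _ _).1 hh (G n) (Submodule.subset_span ⟨n, rfl⟩)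
    have h1 : ⟪G n, h⟫ = ∫ t, (G n) t * h t ∂(msr a b) := by
      rw [MeasureTheory.L2.inner_def]
      congr 1
      ext t; simp [mul_comm]
    rw [h1] at h0
    rw [← h0]
    apply MeasureTheory.integral_congr_ae
    filter_upwards [hGcoe n] with t hGt
    rw [hGt]
    norm_num
  have hsub : ((Submodule.span ℝ (Set.range G) :
      Submodule ℝ (Lp ℝ 2 (msr a b))) : Set (Lp ℝ 2 (msr a b))) ⊆
      {F : Lp ℝ 2 (msr a b) | ∃ f : ℝ → ℝ, MemLp f 2 (msr a b) ∧
        (F : ℝ → ℝ) =ᵐ[msr a b] leftFrac a α f} := by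
    rintro F hF
    rw [SetLike.mem_coe, Finsupp.mem_span_range_iff_exists_finsupp] at hF
    obtain ⟨cf, hcf⟩ := hF
    set d : ℕ → ℝ := fun n => cf n * Real.Gamma α * (betaC α n)⁻¹ with hd
    refine ⟨fun s => ∑ n ∈ cf.support, d n * (s - a) ^ n,
      mem2 (continuous_finset_sum _ fun n _ => continuous_const.mul (by fun_prop)), ?_⟩
    have hFsum : ⇑F =ᵐ[msr a b]
        fun t => ∑ n ∈ cf.support, cf n * (t - a) ^ (α + (n:ℝ)) := by
      rw [← hcf]
      exact coeFn_sum_smul cf.support (fun n => cf n) G _ hGcoe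
    filter_upwards [hFsum, msr_ae a b] with t hFt ht
    rw [hFt]
    have hInt : ∀ n : ℕ, IntegrableOn (fun s => (t - s) ^ (α-1) * (s - a) ^ n)
        (Ioo a t) volume := by
      intro n
      have h2 := leftInt hα ht.1 n
      rw [intervalIntegrable_iff_integrableOn_Ioc_of_le ht.1.le] at h2
      exact h2.mono_set Ioo_subset_Ioc_self
    have h3 : ∀ s : ℝ, (t - s) ^ (α-1) * (∑ n ∈ cf.support, d n * (s - a) ^ n)
        = ∑ n ∈ cf.support, d n * ((t - s) ^ (α-1) * (s - a) ^ n) := by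
      intro s
      rw [Finset.mul_sum]
      exact Finset.sum_congr rfl fun n _ => by ring
    have h2 : ∫ s in Ioo a t, (t - s) ^ (α-1) * (∑ n ∈ cf.support, d n * (s - a) ^ n)
        = ∑ n ∈ cf.support, d n * ((t - a) ^ (α + (n:ℝ)) * betaC α n) := by
      simp only [h3]
      rw [integral_finset_sum _ (fun n _ => (hInt n).const_mul (d n))]
      refine Finset.sum_congr rfl fun n _ => ?_
      rw [MeasureTheory.integral_const_mul, left_moment hα ht.1 n]
    show _ = leftFrac a α _ t
    simp only [leftFrac]
    rw [h2, Finset.mul_sum]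
    refine Finset.sum_congr rfl fun n _ => ?_
    rw [hd]
    have hB : betaC α n ≠ 0 := (betaC_pos hα n).ne'
    field_simp
  exact Kdense.mono hsub

lemma right_dense {a b α : ℝ} (hab : a < b) (hα : 0 < α) :
    Dense {F : Lp ℝ 2 (msr a b) |
      ∃ f : ℝ → ℝ, MemLp f 2 (msr a b) ∧
        (F : ℝ → ℝ) =ᵐ[msr a b] rightFrac b α f} := by
  classical
  have hΓ : Real.Gamma α ≠ 0 := (Real.Gamma_pos_of_pos hα).ne'
  have gmem : ∀ n : ℕ, MemLp (fun t : ℝ => (b - t) ^ (α + (n:ℝ))) 2 (msr a b) := fun n =>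
    mem2 ((Real.continuous_rpow_const (by positivity)).comp (continuous_const.sub continuous_id))
  set G : ℕ → Lp ℝ 2 (msr a b) := fun n => (gmem n).toLp _ with hG
  have hGcoe : ∀ n, ⇑(G n) =ᵐ[msr a b] fun t : ℝ => (b - t) ^ (α + (n:ℝ)) := fun n =>
    MemLp.coeFn_toLp _
  have Kdense : Dense ((Submodule.span ℝ (Set.range G) :
      Submodule ℝ (Lp ℝ 2 (msr a b))) : Set (Lp ℝ 2 (msr a b))) := by
    rw [Submodule.dense_iff_topologicalClosure_eq_top,
      Submodule.topologicalClosure_eq_top_iff, Submodule.eq_bot_iff]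
    intro h hh
    refine ortho_zero hab hα (-1) b (by ring)
      (fun t ht => by rw [show -1 * (t - b) = b - t from by ring]; exact sub_pos.2 ht.2)
      h (fun n => ?_)
    have h0 : ⟪G n, h⟫ = 0 :=
      (Submodule.mem_orthogonal _ _).1 hh (G n) (Submodule.subset_span ⟨n, rfl⟩)
    have h1 : ⟪G n, h⟫ = ∫ t, (G n) t * h t ∂(msr a b) := by
      rw [MeasureTheory.L2.inner_def]
      congr 1
      ext t; simp [mul_comm]
    rw [h1] at h0
    rw [← h0]
    apply MeasureTheory.integral_congr_ae
    filter_upwards [hGcoe n] with t hGt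
    rw [show -1 * (t - b) = b - t from by ring, hGt]
  have hsub : ((Submodule.span ℝ (Set.range G) :
      Submodule ℝ (Lp ℝ 2 (msr a b))) : Set (Lp ℝ 2 (msr a b))) ⊆
      {F : Lp ℝ 2 (msr a b) | ∃ f : ℝ → ℝ, MemLp f 2 (msr a b) ∧
        (F : ℝ → ℝ) =ᵐ[msr a b] rightFrac b α f} := by
    rintro F hF
    rw [SetLike.mem_coe, Finsupp.mem_span_range_iff_exists_finsupp] at hF
    obtain ⟨cf, hcf⟩ := hF
    set d : ℕ → ℝ := fun n => cf n * Real.Gamma α * (betaC α n)⁻¹ with hd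
    refine ⟨fun s => ∑ n ∈ cf.support, d n * (b - s) ^ n,
      mem2 (continuous_finset_sum _ fun n _ => continuous_const.mul (by fun_prop)), ?_⟩
    have hFsum : ⇑F =ᵐ[msr a b]
        fun t => ∑ n ∈ cf.support, cf n * (b - t) ^ (α + (n:ℝ)) := by
      rw [← hcf]
      exact coeFn_sum_smul cf.support (fun n => cf n) G _ hGcoe
    filter_upwards [hFsum, msr_ae a b] with t hFt ht
    rw [hFt]
    have hInt : ∀ n : ℕ, IntegrableOn (fun s => (s - t) ^ (α-1) * (b - s) ^ n)
        (Ioo t b) volume := by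
      intro n
      have h2 := rightInt hα ht.2 n
      rw [intervalIntegrable_iff_integrableOn_Ioc_of_le ht.2.le] at h2
      exact h2.mono_set Ioo_subset_Ioc_self
    have h3 : ∀ s : ℝ, (s - t) ^ (α-1) * (∑ n ∈ cf.support, d n * (b - s) ^ n)
        = ∑ n ∈ cf.support, d n * ((s - t) ^ (α-1) * (b - s) ^ n) := by
      intro s
      rw [Finset.mul_sum]
      exact Finset.sum_congr rfl fun n _ => by ring
    have h2 : ∫ s in Ioo t b, (s - t) ^ (α-1) * (∑ n ∈ cf.support, d n * (b - s) ^ n)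
        = ∑ n ∈ cf.support, d n * ((b - t) ^ (α + (n:ℝ)) * betaC α n) := by
      simp only [h3]
      rw [integral_finset_sum _ (fun n _ => (hInt n).const_mul (d n))]
      refine Finset.sum_congr rfl fun n _ => ?_
      rw [MeasureTheory.integral_const_mul, right_moment hα ht.2 n]
    show _ = rightFrac b α _ t
    simp only [rightFrac]
    rw [h2, Finset.mul_sum]
    refine Finset.sum_congr rfl fun n _ => ?_
    rw [hd]
    have hB : betaC α n ≠ 0 := (betaC_pos hα n).ne'
    field_simp
  exact Kdense.mono hsub

theorem fractional_integrals_dense_range_in_L2 (a b α : ℝ) (hab : a < b) (hα : 0 < α) :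
    Dense {F : Lp ℝ 2 (msr a b) |
      ∃ f : ℝ → ℝ, MemLp f 2 (msr a b) ∧
        (F : ℝ → ℝ) =ᵐ[msr a b] leftFrac a α f} ∧
    Dense {F : Lp ℝ 2 (msr a b) |
      ∃ f : ℝ → ℝ, MemLp f 2 (msr a b) ∧
        (F : ℝ → ℝ) =ᵐ[msr a b] rightFrac b α f} :=
  ⟨left_dense hab hα, right_dense hab hα⟩
end

section
/- Let a < b be real numbers and let 0 < α < 1/2. For a < y ≤ b define g_y(t) := Γ(1-α)^{-1} (y-t)^{-α} 1_{(a,y)}(t) for t ∈ (a,b). Then g_y ∈ L²(a,b) and I_{b-}^α g_y = 1_{(a,y)} almost everywhere on (a,b); that is, (I_{b-}^α g_y)(t) = 1 for almost every t ∈ (a,y) and (I_{b-}^α g_y)(t) = 0 for almost every t ∈ [y,b). In particular, every indicator function 1_{[x,y)} with a ≤ x < y ≤ b belongs to the range I_{b-}^α(L²(a,b)). -/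
open MeasureTheory Set
open scoped NNReal ENNReal

/-- The function `g_y(t) = Γ(1-α)⁻¹ (y-t)^(-α) 1_{(a,y)}(t)`. -/
noncomputable def gy (a α y : ℝ) : ℝ → ℝ :=
  fun t => (Real.Gamma (1 - α))⁻¹ * (Ioo a y).indicator (fun t => (y - t) ^ (-α)) t

/-! ### Auxiliary lemmas -/

lemma meas_prod_aux {α t y : ℝ} : Measurable (fun s => (s - t) ^ (α - 1) * (y - s) ^ (-α)) := by
  fun_prop

lemma beta_real_aux {α : ℝ} (hα : 0 < α) (hα1 : α < 1) :
    ∫ x in (0:ℝ)..1, x ^ (α - 1) * (1 - x) ^ (-α) = Real.Gamma α * Real.Gamma (1 - α) := by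
  have h1 : (0:ℝ) < 1 - α := by linarith
  have hc : Complex.Gamma (α:ℂ) * Complex.Gamma (1 - (α:ℂ))
      = Complex.betaIntegral (α:ℂ) (1 - (α:ℂ)) := by
    have := Complex.Gamma_mul_Gamma_eq_betaIntegral (s := (α:ℂ)) (t := 1 - (α:ℂ))
      (by simpa using hα) (by simp; linarith)
    simpa [Complex.Gamma_one] using this
  have hint : Complex.betaIntegral (α:ℂ) (1 - (α:ℂ))
      = ((∫ x in (0:ℝ)..1, x ^ (α - 1) * (1 - x) ^ (-α) : ℝ) : ℂ) := by
    rw [Complex.betaIntegral, ← intervalIntegral.integral_ofReal]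
    refine intervalIntegral.integral_congr (fun x hx => ?_)
    rw [uIcc_of_le (by norm_num)] at hx
    obtain ⟨hx0, hx1⟩ := hx
    rw [Complex.ofReal_mul, Complex.ofReal_cpow hx0,
      Complex.ofReal_cpow (by linarith : (0:ℝ) ≤ 1 - x)]
    rw [show (1 - (α:ℂ)) - 1 = ((-α : ℝ) : ℂ) by push_cast; ring]
    push_cast
    ring
  have key := hc.trans hint
  rw [show (1 - (α:ℂ)) = ((1 - α : ℝ) : ℂ) by push_cast; ring] at key
  rw [Complex.Gamma_ofReal, Complex.Gamma_ofReal, ← Complex.ofReal_mul] at key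
  exact (Complex.ofReal_inj.mp key).symm

lemma integrableOn_prod_aux {α : ℝ} (hα : 0 < α) (hα1 : α < 1) {t y : ℝ} (hty : t < y) :
    IntegrableOn (fun s => (s - t) ^ (α - 1) * (y - s) ^ (-α)) (Ioo t y) := by
  set m := (t + y) / 2 with hm
  have htm : t < m := by rw [hm]; linarith
  have hmy : m < y := by rw [hm]; linarith
  have hsub : Ioo t y ⊆ Ioc t m ∪ Ioo m y := by
    intro s hs
    rcases le_or_gt s m with h | h
    · exact Or.inl ⟨hs.1, h⟩
    · exact Or.inr ⟨h, hs.2⟩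
  refine IntegrableOn.mono_set ?_ hsub
  apply IntegrableOn.union
  · have hbase : IntegrableOn (fun s => (s - t) ^ (α - 1) * (y - m) ^ (-α)) (Ioc t m) := by
      have h1 : IntervalIntegrable (fun s => (s - t) ^ (α - 1)) volume t m := by
        have := (intervalIntegral.intervalIntegrable_rpow' (a := 0) (b := m - t)
          (by linarith : (-1:ℝ) < α - 1)).comp_sub_right t
        simpa using this
      have h2 := h1.mul_const ((y - m) ^ (-α))
      rwa [intervalIntegrable_iff_integrableOn_Ioc_of_le htm.le] at h2
    refine Integrable.mono' hbase (meas_prod_aux.aestronglyMeasurable.restrict) ?_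
    refine (ae_restrict_iff' measurableSet_Ioc).mpr (Filter.Eventually.of_forall fun s hs => ?_)
    have h1 : 0 < s - t := by linarith [hs.1]
    have h2 : 0 < y - m := by linarith
    rw [Real.norm_eq_abs, abs_mul, abs_of_nonneg (Real.rpow_nonneg h1.le _),
      abs_of_nonneg (Real.rpow_nonneg (by linarith [hs.2] : (0:ℝ) ≤ y - s) _)]
    exact mul_le_mul_of_nonneg_left
      (Real.rpow_le_rpow_of_nonpos h2 (by linarith [hs.2]) (by linarith))
      (Real.rpow_nonneg h1.le _)
  · have hbase : IntegrableOn (fun s => (m - t) ^ (α - 1) * (y - s) ^ (-α)) (Ioo m y) := by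
      have h1 : IntervalIntegrable (fun s => (y - s) ^ (-α)) volume m y := by
        have := (intervalIntegral.intervalIntegrable_rpow' (a := 0) (b := y - m)
          (by linarith : (-1:ℝ) < -α)).comp_sub_left y
        simpa using this.symm
      have h2 := h1.const_mul ((m - t) ^ (α - 1))
      rw [intervalIntegrable_iff_integrableOn_Ioc_of_le hmy.le] at h2
      exact h2.mono_set Ioo_subset_Ioc_self
    refine Integrable.mono' hbase (meas_prod_aux.aestronglyMeasurable.restrict) ?_
    refine (ae_restrict_iff' measurableSet_Ioo).mpr (Filter.Eventually.of_forall fun s hs => ?_)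
    have h1 : 0 < m - t := by linarith
    have h2 : 0 < y - s := by linarith [hs.2]
    rw [Real.norm_eq_abs, abs_mul,
      abs_of_nonneg (Real.rpow_nonneg (by linarith [hs.1] : (0:ℝ) ≤ s - t) _),
      abs_of_nonneg (Real.rpow_nonneg h2.le _)]
    refine mul_le_mul_of_nonneg_right ?_ (Real.rpow_nonneg h2.le _)
    exact Real.rpow_le_rpow_of_nonpos h1 (by linarith [hs.1]) (by linarith)

lemma beta_value_aux {α : ℝ} (hα : 0 < α) (hα1 : α < 1) {t y : ℝ} (hty : t < y) :
    ∫ s in Ioo t y, (s - t) ^ (α - 1) * (y - s) ^ (-α)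
      = Real.Gamma α * Real.Gamma (1 - α) := by
  have hd : (0:ℝ) < y - t := by linarith
  rw [← integral_Ioc_eq_integral_Ioo, ← intervalIntegral.integral_of_le hty.le]
  have h1 : (∫ s in t..y, (s - t) ^ (α - 1) * (y - s) ^ (-α))
      = ∫ u in (0:ℝ)..(y - t), u ^ (α - 1) * (y - t - u) ^ (-α) := by
    have := intervalIntegral.integral_comp_add_right
      (a := (0:ℝ)) (b := y - t) (fun s => (s - t) ^ (α - 1) * (y - s) ^ (-α)) t
    simp only [zero_add, sub_add_cancel, add_sub_cancel_right] at this
    rw [← this]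
    refine intervalIntegral.integral_congr fun u hu => ?_
    ring_nf
  have h2 : (∫ u in (0:ℝ)..(y - t), u ^ (α - 1) * (y - t - u) ^ (-α))
      = (y - t) • ∫ x in (0:ℝ)..1, ((y - t) * x) ^ (α - 1) * ((y - t) * (1 - x)) ^ (-α) := by
    have := intervalIntegral.smul_integral_comp_mul_left
      (a := (0:ℝ)) (b := 1) (fun u => u ^ (α - 1) * (y - t - u) ^ (-α)) (y - t)
    simp only [mul_zero, mul_one] at this
    rw [← this]
    congr 1
    refine intervalIntegral.integral_congr fun x hx => ?_
    ring_nf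
  have h3 : (∫ x in (0:ℝ)..1, ((y - t) * x) ^ (α - 1) * ((y - t) * (1 - x)) ^ (-α))
      = (y - t) ^ (α - 1) * (y - t) ^ (-α) * ∫ x in (0:ℝ)..1, x ^ (α - 1) * (1 - x) ^ (-α) := by
    rw [← intervalIntegral.integral_const_mul]
    refine intervalIntegral.integral_congr fun x hx => ?_
    rw [uIcc_of_le (by norm_num)] at hx
    rw [Real.mul_rpow hd.le hx.1, Real.mul_rpow hd.le (by linarith [hx.2] : (0:ℝ) ≤ 1 - x)]
    ring
  rw [h1, h2, h3, beta_real_aux hα hα1, smul_eq_mul]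
  have key : (y - t) * ((y - t) ^ (α - 1) * (y - t) ^ (-α)) = 1 := by
    rw [← Real.rpow_add hd, show α - 1 + -α = -1 by ring, Real.rpow_neg_one]
    field_simp
  calc (y-t) * ((y-t)^(α-1) * (y-t)^(-α) * (Real.Gamma α * Real.Gamma (1-α)))
      = (y-t) * ((y-t)^(α-1) * (y-t)^(-α)) * (Real.Gamma α * Real.Gamma (1-α)) := by ring
    _ = Real.Gamma α * Real.Gamma (1-α) := by rw [key, one_mul]

lemma gy_integrand_eq {a α y t : ℝ} (s : ℝ) :
    (s - t) ^ (α - 1) * gy a α y s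
      = (Real.Gamma (1 - α))⁻¹ *
        (Ioo a y).indicator (fun s => (s - t) ^ (α - 1) * (y - s) ^ (-α)) s := by
  rw [gy, Set.indicator_mul_right _ (fun s => (s - t) ^ (α - 1))]
  ring

lemma rightFrac_gy_eq {a b α y t : ℝ} (hyb : y ≤ b) (hat : a ≤ t) :
    rightFrac b α (gy a α y) t = (Real.Gamma α)⁻¹ * ((Real.Gamma (1 - α))⁻¹ *
      ∫ s in Ioo t y, (s - t) ^ (α - 1) * (y - s) ^ (-α)) := by
  rw [rightFrac]
  congr 1
  simp_rw [gy_integrand_eq]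
  rw [integral_const_mul]
  congr 1
  rw [integral_indicator measurableSet_Ioo, Measure.restrict_restrict measurableSet_Ioo,
    Ioo_inter_Ioo, max_eq_right hat, min_eq_left hyb]

lemma key_int_aux {a b α y t : ℝ} (hα : 0 < α) (hα1 : α < 1)
    (hyb : y ≤ b) (hat : a ≤ t) :
    IntegrableOn (fun s => (s - t) ^ (α - 1) * gy a α y s) (Ioo t b) := by
  simp_rw [gy_integrand_eq]
  apply Integrable.const_mul
  rw [integrable_indicator_iff measurableSet_Ioo]
  have hms : (volume.restrict (Ioo t b)).restrict (Ioo a y) = volume.restrict (Ioo t y) := by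
    rw [Measure.restrict_restrict measurableSet_Ioo, Ioo_inter_Ioo,
      max_eq_right hat, min_eq_left hyb]
  show Integrable _ ((volume.restrict (Ioo t b)).restrict (Ioo a y))
  rw [hms]
  rcases lt_or_ge t y with h | h
  · exact integrableOn_prod_aux hα hα1 h
  · rw [Ioo_eq_empty (not_lt.mpr h), Measure.restrict_empty]
    exact integrable_zero_measure

lemma memL2_aux {a b α y : ℝ} (hα : 0 < α) (hα' : α < 1/2) (hay : a < y) :
    MemLp (gy a α y) 2 (msr a b) := by
  have hmeas : AEStronglyMeasurable (gy a α y) (msr a b) := by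
    apply Measurable.aestronglyMeasurable
    apply Measurable.const_mul
    exact Measurable.indicator (by fun_prop) measurableSet_Ioo
  rw [memLp_two_iff_integrable_sq hmeas]
  have hsq : ∀ t : ℝ, gy a α y t ^ 2
      = ((Real.Gamma (1 - α))⁻¹) ^ 2 *
        (Ioo a y).indicator (fun t => ((y - t) ^ (-α)) ^ 2) t := by
    intro t
    rw [gy]
    by_cases ht : t ∈ Ioo a y
    · rw [Set.indicator_of_mem ht, Set.indicator_of_mem ht]; ring
    · rw [Set.indicator_of_notMem ht, Set.indicator_of_notMem ht]; ring
  simp_rw [hsq]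
  apply Integrable.const_mul
  rw [msr, integrable_indicator_iff measurableSet_Ioo]
  have hvol : IntegrableOn (fun t => ((y - t) ^ (-α)) ^ 2) (Ioo a y) volume := by
    have h1 : IntervalIntegrable (fun t => (y - t) ^ (-(2*α))) volume a y := by
      have := (intervalIntegral.intervalIntegrable_rpow' (a := 0) (b := y - a)
        (by linarith : (-1:ℝ) < -(2*α))).comp_sub_left y
      simpa using this.symm
    rw [intervalIntegrable_iff_integrableOn_Ioc_of_le hay.le] at h1
    refine IntegrableOn.congr_fun (h1.mono_set Ioo_subset_Ioc_self) ?_ measurableSet_Ioo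
    intro t ht
    have h2 : 0 < y - t := by linarith [ht.2]
    show (y - t) ^ (-(2*α)) = ((y - t) ^ (-α)) ^ 2
    rw [← Real.rpow_natCast ((y - t) ^ (-α)) 2, ← Real.rpow_mul h2.le]
    norm_num
    ring_nf
  exact hvol.mono_measure Measure.restrict_le_self

theorem rightFrac_gy_eq_indicator (a b α : ℝ) (hab : a < b)
    (hα : 0 < α) (hα' : α < 1/2) :
    (∀ y : ℝ, a < y → y ≤ b →
      MemLp (gy a α y) 2 (msr a b) ∧
      ∀ᵐ t ∂(msr a b),
        (t < y → rightFrac b α (gy a α y) t = 1) ∧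
        (y ≤ t → rightFrac b α (gy a α y) t = 0)) ∧
    -- In particular, every indicator `1_{[x,y)}` with `a ≤ x < y ≤ b` belongs to
    -- the range `I_{b-}^α (L²(a,b))`.
    (∀ x y : ℝ, a ≤ x → x < y → y ≤ b →
      ∃ g : ℝ → ℝ, MemLp g 2 (msr a b) ∧
        (Ico x y).indicator (fun _ => (1 : ℝ)) =ᵐ[msr a b] rightFrac b α g) := by
  have hα1 : α < 1 := by linarith
  have hΓα : Real.Gamma α ≠ 0 := (Real.Gamma_pos_of_pos hα).ne'
  have hΓα' : Real.Gamma (1 - α) ≠ 0 := (Real.Gamma_pos_of_pos (by linarith)).ne'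
  have part1 : ∀ y : ℝ, a < y → y ≤ b →
      MemLp (gy a α y) 2 (msr a b) ∧
      ∀ᵐ t ∂(msr a b),
        (t < y → rightFrac b α (gy a α y) t = 1) ∧
        (y ≤ t → rightFrac b α (gy a α y) t = 0) := by
    intro y hay hyb
    refine ⟨memL2_aux hα hα' hay, ?_⟩
    rw [msr]
    filter_upwards [ae_restrict_mem measurableSet_Ioo] with t ht
    constructor
    · intro hty
      rw [rightFrac_gy_eq hyb ht.1.le, beta_value_aux hα hα1 hty]
      field_simp
    · intro hyt
      rw [rightFrac_gy_eq hyb ht.1.le, Ioo_eq_empty (not_lt.mpr hyt),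
        Measure.restrict_empty, integral_zero_measure, mul_zero, mul_zero]
  refine ⟨part1, ?_⟩
  intro x y hax hxy hyb
  rcases eq_or_lt_of_le hax with rfl | haxlt
  · -- x = a : use gy a α y itself
    obtain ⟨hmem, hae⟩ := part1 y hxy hyb
    refine ⟨gy a α y, hmem, ?_⟩
    have : ∀ᵐ t ∂(msr a b), t ∈ Ioo a b := by rw [msr]; exact ae_restrict_mem measurableSet_Ioo
    filter_upwards [hae, this] with t h1 ht
    by_cases hty : t < y
    · rw [Set.indicator_of_mem (show t ∈ Ico a y from ⟨ht.1.le, hty⟩), h1.1 hty]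
    · rw [Set.indicator_of_notMem (fun hmem' => hty hmem'.2), h1.2 (not_lt.mp hty)]
  · -- a < x : use gy a α y - gy a α x
    obtain ⟨hmemy, haey⟩ := part1 y (lt_trans haxlt hxy) hyb
    obtain ⟨hmemx, haex⟩ := part1 x haxlt (le_of_lt (lt_of_lt_of_le hxy hyb))
    refine ⟨fun s => gy a α y s - gy a α x s, hmemy.sub hmemx, ?_⟩
    have hmem : ∀ᵐ t ∂(msr a b), t ∈ Ioo a b := by
      rw [msr]; exact ae_restrict_mem measurableSet_Ioo
    filter_upwards [haey, haex, hmem] with t h1 h2 ht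
    have hlin : rightFrac b α (fun s => gy a α y s - gy a α x s) t
        = rightFrac b α (gy a α y) t - rightFrac b α (gy a α x) t := by
      simp only [rightFrac, mul_sub]
      rw [integral_sub (key_int_aux hα hα1 hyb ht.1.le)
        (key_int_aux hα hα1 (le_of_lt (lt_of_lt_of_le hxy hyb)) ht.1.le), mul_sub]
    rw [hlin]
    rcases lt_or_ge t x with htx | hxt
    · rw [Set.indicator_of_notMem (fun hmem' => absurd hmem'.1 (not_le.mpr htx)),
        h1.1 (lt_trans htx hxy), h2.1 htx, sub_self]
    · rcases lt_or_ge t y with hty | hyt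
      · rw [Set.indicator_of_mem (show t ∈ Ico x y from ⟨hxt, hty⟩), h1.1 hty, h2.2 hxt, sub_zero]
      · rw [Set.indicator_of_notMem (fun hmem' => absurd hmem'.2 (not_lt.mpr hyt)),
          h1.2 hyt, h2.2 hxt, sub_self]
end

section
/- Let a < b be real numbers and let 0 < α < 1/2. The linear span of the family of functions {g_y : a < y ≤ b}, where g_y(t) := Γ(1-α)^{-1} (y-t)^{-α} 1_{(a,y)}(t), is dense in L²(a,b). Equivalently, the linear span of the indicator functions 1_{[x,y)}, a ≤ x < y ≤ b, is dense in the space H^α(a,b) := I_{b-}^α(L²(a,b)) equipped with the norm ‖I_{b-}^α g‖_{H^α} := ‖g‖_{L²(a,b)}. -/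
open MeasureTheory Set
open scoped NNReal ENNReal

lemma integrableOn_rpow_sub {β : ℝ} (hβ : -1 < β) (t w : ℝ) :
    IntegrableOn (fun z => (z - t) ^ β) (Ioo t w) := by
  rcases le_or_gt w t with h | h
  · rw [Ioo_eq_empty (by exact fun hc => absurd (hc.trans_le h) (lt_irrefl t))]
    exact integrableOn_empty
  · have h1 : IntervalIntegrable (fun x : ℝ => x ^ β) volume 0 (w - t) :=
      intervalIntegral.intervalIntegrable_rpow' hβ
    have h2 : IntervalIntegrable (fun z : ℝ => (z - t) ^ β) volume t w := by
      have := h1.comp_sub_right t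
      simpa using this
    exact ((intervalIntegrable_iff_integrableOn_Ioc_of_le h.le).mp h2).mono_set Ioo_subset_Ioc_self

open intervalIntegral in
lemma integral_rpow_sub {β : ℝ} (hβ : -1 < β) {t w : ℝ} (htw : t ≤ w) :
    ∫ z in Ioo t w, (z - t) ^ β = (w - t) ^ (β + 1) / (β + 1) := by
  have h0 : (0:ℝ) ^ (β + 1) = 0 := Real.zero_rpow (by linarith)
  rw [← integral_Ioc_eq_integral_Ioo, ← intervalIntegral.integral_of_le htw]
  have := intervalIntegral.integral_comp_sub_right (fun x : ℝ => x ^ β) t (a := t) (b := w)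
  rw [this, sub_self, integral_rpow (Or.inl hβ), h0, sub_zero]

lemma integrableOn_rpow_sub' {r : ℝ} (hr : -1 < r) (a y : ℝ) :
    IntegrableOn (fun s : ℝ => (y - s) ^ r) (Ioo a y) := by
  rcases le_or_gt y a with h | h
  · rw [Ioo_eq_empty (by exact fun hc => absurd (hc.trans_le h) (lt_irrefl a))]
    exact integrableOn_empty
  · have h1 : IntervalIntegrable (fun x : ℝ => x ^ r) volume 0 (y - a) :=
      intervalIntegral.intervalIntegrable_rpow' hr
    have h2 : IntervalIntegrable (fun s : ℝ => (y - s) ^ r) volume a y := by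
      have := (h1.comp_sub_left y).symm
      simpa using this
    exact ((intervalIntegrable_iff_integrableOn_Ioc_of_le h.le).mp h2).mono_set Ioo_subset_Ioc_self


lemma fubini_step {a b : ℝ} (hab : a < b) {β : ℝ} (hβ : -1 < β) {f : ℝ → ℝ}
    (hfi : IntegrableOn f (Ioo a b))
    (H : ∀ y ∈ Ioc a b, ∫ t in Ioo a y, (y - t) ^ β * f t = 0) :
    ∀ y ∈ Ioc a b, ∫ t in Ioo a y, (y - t) ^ (β + 1) * f t = 0 := by
  rintro w ⟨haw, hwb⟩
  set ν : Measure ℝ := volume.restrict (Ioo a w) with hν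
  have hsub : Ioo a w ⊆ Ioo a b := Ioo_subset_Ioo le_rfl hwb
  have hfi' : IntegrableOn f (Ioo a w) := hfi.mono_set hsub
  set K : ℝ → ℝ → ℝ := fun z t => if t < z then (z - t) ^ β * f t else 0 with hK
  -- measurability
  have hs : MeasurableSet {p : ℝ × ℝ | p.2 < p.1} :=
    measurableSet_lt measurable_snd measurable_fst
  have hmeas : AEStronglyMeasurable (Function.uncurry K) (ν.prod ν) := by
    have h1 : AEStronglyMeasurable (fun p : ℝ × ℝ => (p.1 - p.2) ^ β * f p.2) (ν.prod ν) := by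
      refine AEStronglyMeasurable.mul ?_ (hfi'.aestronglyMeasurable.comp_snd)
      exact Measurable.aestronglyMeasurable (by measurability)
    have h2 : Function.uncurry K =
        {p : ℝ × ℝ | p.2 < p.1}.indicator (fun p => (p.1 - p.2) ^ β * f p.2) := by
      funext p
      simp only [Function.uncurry, hK, Set.indicator_apply, mem_setOf_eq]
    rw [h2]
    exact h1.indicator hs
  -- inner lintegral bound
  set C : ℝ≥0∞ := ENNReal.ofReal ((b - a) ^ (β + 1) / (β + 1)) with hC
  have hCne : C ≠ ⊤ := ENNReal.ofReal_ne_top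
  have hbound : ∀ t ∈ Ioo a w, (∫⁻ z, ‖K z t‖₊ ∂ν) ≤ C * ‖f t‖₊ := by
    intro t ht
    have hinter : Ioi t ∩ Ioo a w = Ioo t w := by
      ext z; constructor
      · rintro ⟨h1, _, h3⟩; exact ⟨h1, h3⟩
      · rintro ⟨h1, h2⟩; exact ⟨h1, ht.1.trans h1, h2⟩
    have h1 : ∀ z, (‖K z t‖₊ : ℝ≥0∞) =
        (Ioi t).indicator (fun z => ENNReal.ofReal ((z - t) ^ β) * ‖f t‖₊) z := by
      intro z
      simp only [Set.indicator_apply, mem_Ioi, hK]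
      by_cases hz : t < z
      · simp only [if_pos hz, nnnorm_mul, ENNReal.coe_mul]
        congr 1
        rw [← Real.enorm_eq_ofReal (Real.rpow_nonneg (by linarith [hz]) β)]; rfl
      · simp [if_neg hz]
    calc (∫⁻ z, ‖K z t‖₊ ∂ν)
        = ∫⁻ z in Ioo t w, ENNReal.ofReal ((z - t) ^ β) * ‖f t‖₊ ∂volume := by
          simp_rw [h1]
          rw [hν, lintegral_indicator measurableSet_Ioi, Measure.restrict_restrict
            measurableSet_Ioi, hinter]
      _ = (∫⁻ z in Ioo t w, ENNReal.ofReal ((z - t) ^ β) ∂volume) * ‖f t‖₊ := by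
          rw [lintegral_mul_const]
          exact Measurable.ennreal_ofReal (by measurability)
      _ ≤ C * ‖f t‖₊ := by
          gcongr
          rw [← ofReal_integral_eq_lintegral_ofReal (integrableOn_rpow_sub hβ t w) ?_]
          · rw [integral_rpow_sub hβ (le_of_lt ht.2)]
            apply ENNReal.ofReal_le_ofReal
            have h2 : (w - t) ^ (β + 1) ≤ (b - a) ^ (β + 1) :=
              Real.rpow_le_rpow (by linarith [ht.2]) (by linarith [ht.1]) (by linarith)
            exact div_le_div_of_nonneg_right h2 (by linarith) |>.trans_eq rfl
          · filter_upwards [ae_restrict_mem measurableSet_Ioo] with z hz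
            exact Real.rpow_nonneg (by linarith [hz.1]) β
  -- finite integral
  have hfin : HasFiniteIntegral (Function.uncurry K) (ν.prod ν) := by
    show (∫⁻ p, ‖Function.uncurry K p‖₊ ∂ν.prod ν) < ⊤
    calc ∫⁻ p, ‖Function.uncurry K p‖₊ ∂ν.prod ν
        = ∫⁻ t, ∫⁻ z, ‖K z t‖₊ ∂ν ∂ν :=
          lintegral_prod_symm _ hmeas.enorm
      _ ≤ ∫⁻ t, C * ‖f t‖₊ ∂ν := by
          refine lintegral_mono_ae ?_
          filter_upwards [ae_restrict_mem measurableSet_Ioo] with t ht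
          exact hbound t ht
      _ = C * ∫⁻ t, ‖f t‖₊ ∂ν := lintegral_const_mul' _ _ hCne
      _ < ⊤ := ENNReal.mul_lt_top hCne.lt_top hfi'.hasFiniteIntegral
  have hInt : Integrable (Function.uncurry K) (ν.prod ν) := ⟨hmeas, hfin⟩
  -- swap
  have hswap := integral_integral_swap hInt
  -- LHS is zero
  have hLHS : (∫ z, ∫ t, K z t ∂ν ∂ν) = 0 := by
    rw [← integral_zero ℝ ℝ (μ := ν)]
    refine integral_congr_ae ?_
    filter_upwards [ae_restrict_mem measurableSet_Ioo] with z hz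
    have hinter : Iio z ∩ Ioo a w = Ioo a z := by
      ext u; constructor
      · rintro ⟨h1, h2, _⟩; exact ⟨h2, h1⟩
      · rintro ⟨h1, h2⟩; exact ⟨h2, h1, h2.trans hz.2⟩
    have h3 : ∀ t, K z t = (Iio z).indicator (fun t => (z - t) ^ β * f t) t := by
      intro t
      simp only [Set.indicator_apply, mem_Iio, hK]
    simp_rw [h3]
    rw [hν, integral_indicator measurableSet_Iio, Measure.restrict_restrict measurableSet_Iio,
      hinter]
    exact H z ⟨hz.1, le_of_lt (lt_of_lt_of_le hz.2 hwb)⟩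
  -- RHS computation
  have hRHS : (∫ t, ∫ z, K z t ∂ν ∂ν) =
      ∫ t, (β + 1)⁻¹ * ((w - t) ^ (β + 1) * f t) ∂ν := by
    refine integral_congr_ae ?_
    filter_upwards [ae_restrict_mem measurableSet_Ioo] with t ht
    have hinter : Ioi t ∩ Ioo a w = Ioo t w := by
      ext z; constructor
      · rintro ⟨h1, _, h3⟩; exact ⟨h1, h3⟩
      · rintro ⟨h1, h2⟩; exact ⟨h1, ht.1.trans h1, h2⟩
    have h3 : ∀ z, K z t = (Ioi t).indicator (fun z => (z - t) ^ β * f t) z := by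
      intro z
      simp only [Set.indicator_apply, mem_Ioi, hK]
    simp_rw [h3]
    rw [hν, integral_indicator measurableSet_Ioi, Measure.restrict_restrict measurableSet_Ioi,
      hinter, integral_mul_const, integral_rpow_sub hβ (le_of_lt ht.2)]
    ring
  rw [hLHS, hRHS, integral_const_mul] at hswap
  have hne : ((β : ℝ) + 1)⁻¹ ≠ 0 := inv_ne_zero (by linarith)
  exact (mul_eq_zero.mp hswap.symm).resolve_left hne


lemma poly_int {a b : ℝ} {g : ℝ → ℝ} (hgi : IntegrableOn g (Ioo a b)) (q : Polynomial ℝ) :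
    IntegrableOn (fun t => q.eval (b - t) * g t) (Ioo a b) := by
  have hc : ContinuousOn (fun t => q.eval (b - t)) (Icc a b) :=
    (q.continuous.comp (continuous_const.sub continuous_id)).continuousOn
  obtain ⟨M, hM⟩ := (isCompact_Icc (a := a) (b := b)).exists_bound_of_continuousOn hc
  refine Integrable.bdd_mul (c := M) hgi ?_ ?_
  · exact ((q.continuous.comp (continuous_const.sub continuous_id)).measurable).aestronglyMeasurable
  · filter_upwards [ae_restrict_mem measurableSet_Ioo] with t ht
    exact hM t (Ioo_subset_Icc_self ht)

lemma moments_zero {a b : ℝ} (hab : a < b) {g : ℝ → ℝ}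
    (hgi : IntegrableOn g (Ioo a b))
    (H : ∀ n : ℕ, ∫ t in Ioo a b, (b - t) ^ n * g t = 0) :
    ∀ᵐ t ∂(volume.restrict (Ioo a b)), g t = 0 := by
  -- polynomials in (b - t)
  have hq : ∀ q : Polynomial ℝ, ∫ t in Ioo a b, q.eval (b - t) * g t = 0 := by
    intro q
    induction q using Polynomial.induction_on with
    | C c =>
      simp only [Polynomial.eval_C]
      rw [MeasureTheory.integral_const_mul]
      have := H 0
      simp only [pow_zero, one_mul] at this
      rw [this, mul_zero]
    | add p q hp hq =>
      simp only [Polynomial.eval_add, add_mul]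
      rw [integral_add (poly_int hgi p) (poly_int hgi q), hp, hq, add_zero]
    | monomial n c _ =>
      simp only [Polynomial.eval_mul, Polynomial.eval_C, Polynomial.eval_pow, Polynomial.eval_X]
      simp_rw [mul_assoc]
      rw [MeasureTheory.integral_const_mul, H (n + 1), mul_zero]
  -- all polynomials
  have hp : ∀ p : Polynomial ℝ, ∫ t in Ioo a b, p.eval t * g t = 0 := by
    intro p
    have := hq (p.comp (Polynomial.C b - Polynomial.X))
    simpa [Polynomial.eval_comp] using this
  -- continuous functions
  have hcont : ∀ φ : ℝ → ℝ, Continuous φ → ∫ t in Ioo a b, φ t * g t = 0 := by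
    intro φ hφ
    set I := ∫ t in Ioo a b, φ t * g t with hI
    by_contra hne
    have hIpos : 0 < |I| := abs_pos.mpr hne
    set M := ∫ t in Ioo a b, |g t| with hM
    have hM0 : 0 ≤ M := integral_nonneg fun t => abs_nonneg _
    set ε : ℝ := |I| / (2 * (M + 1)) with hε
    have hεpos : 0 < ε := by positivity
    obtain ⟨p, hpnear⟩ := exists_polynomial_near_of_continuousOn a b φ
      hφ.continuousOn ε hεpos
    have hφint : IntegrableOn (fun t => (φ t - p.eval t) * g t) (Ioo a b) := by
      have hc : ContinuousOn (fun t => φ t - p.eval t) (Icc a b) :=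
        (hφ.sub p.continuous).continuousOn
      obtain ⟨M', hM'⟩ := (isCompact_Icc (a := a) (b := b)).exists_bound_of_continuousOn hc
      refine Integrable.bdd_mul (c := M') hgi ((hφ.sub p.continuous).measurable).aestronglyMeasurable ?_
      filter_upwards [ae_restrict_mem measurableSet_Ioo] with t ht
      exact hM' t (Ioo_subset_Icc_self ht)
    have hpint : IntegrableOn (fun t => p.eval t * g t) (Ioo a b) := by
      have := poly_int hgi (p.comp (Polynomial.C b - Polynomial.X))
      simpa [Polynomial.eval_comp] using this
    have hsplit : I = ∫ t in Ioo a b, (φ t - p.eval t) * g t := by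
      have : (fun t => φ t * g t) = fun t => (φ t - p.eval t) * g t + p.eval t * g t := by
        funext t; ring
      rw [hI, this, integral_add hφint hpint, hp p, add_zero]
    have hbound : |∫ t in Ioo a b, (φ t - p.eval t) * g t| ≤ ε * M := by
      calc |∫ t in Ioo a b, (φ t - p.eval t) * g t|
          ≤ ∫ t in Ioo a b, |(φ t - p.eval t) * g t| := by
            simpa [Real.norm_eq_abs, abs_mul] using
              norm_integral_le_integral_norm (μ := volume.restrict (Ioo a b))
                (fun t => (φ t - p.eval t) * g t)
        _ ≤ ∫ t in Ioo a b, ε * |g t| := by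
            simp_rw [abs_mul]
            refine integral_mono_ae (hφint.abs.congr (Filter.Eventually.of_forall fun t => by
              simp [abs_mul])) (hgi.abs.const_mul ε) ?_
            filter_upwards [ae_restrict_mem measurableSet_Ioo] with t ht
            have := le_of_lt (hpnear t (Ioo_subset_Icc_self ht))
            have h2 : |φ t - p.eval t| ≤ ε := by
              rw [abs_sub_comm]; exact this
            exact mul_le_mul_of_nonneg_right h2 (abs_nonneg _)
        _ = ε * M := by rw [MeasureTheory.integral_const_mul]
    rw [← hsplit] at hbound
    have : ε * M < |I| := by
      rw [hε]
      rw [div_mul_eq_mul_div, div_lt_iff₀ (by positivity)]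
      nlinarith [hIpos, hM0]
    linarith
  -- conclude
  have hloc : LocallyIntegrable g (volume.restrict (Ioo a b)) := hgi.locallyIntegrable
  refine ae_eq_zero_of_integral_contDiff_smul_eq_zero hloc ?_
  intro ψ hψ _
  have := hcont ψ hψ.continuous
  simpa [smul_eq_mul] using this


-- membership of the truncated kernel in L²
lemma kernel_memL2 {α : ℝ} (hα : 0 < α) (hα' : α < 1/2) (a b y : ℝ) (hy : y ≤ b) :
    MemLp ((Ioo a y).indicator (fun t => (y - t) ^ (-α))) 2 (msr a b) := by
  have hmeas : AEStronglyMeasurable ((Ioo a y).indicator (fun t => (y - t) ^ (-α))) (msr a b) := by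
    have hm : Measurable fun t : ℝ => (y - t) ^ (-α) := by
      have h : (fun t : ℝ => (y - t) ^ (-α)) = (fun x : ℝ => x ^ (-α)) ∘ (fun t => y - t) := rfl
      rw [h]
      exact (by measurability : Measurable fun x : ℝ => x ^ (-α)).comp
        (measurable_const.sub measurable_id)
    exact ((hm.indicator measurableSet_Ioo)).aestronglyMeasurable
  rw [memLp_two_iff_integrable_sq hmeas]
  have hsq : (fun t => ((Ioo a y).indicator (fun t => (y - t) ^ (-α)) t) ^ 2) =
      (Ioo a y).indicator (fun t => ((y - t) ^ (-α)) ^ 2) := by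
    funext t
    simp only [Set.indicator_apply]
    by_cases ht : t ∈ Ioo a y <;> simp [ht]
  rw [hsq]
  unfold msr
  rw [integrable_indicator_iff measurableSet_Ioo, IntegrableOn,
    Measure.restrict_restrict measurableSet_Ioo]
  have hss : Ioo a y ∩ Ioo a b = Ioo a y :=
    inter_eq_self_of_subset_left (Ioo_subset_Ioo le_rfl hy)
  rw [hss]
  have := integrableOn_rpow_sub' (r := -α * 2) (by linarith) a y
  refine this.congr_fun ?_ measurableSet_Ioo
  intro t ht
  show (y - t) ^ (-α * 2) = ((y - t) ^ (-α)) ^ 2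
  rw [← Real.rpow_natCast ((y - t) ^ (-α)) 2, ← Real.rpow_mul (by linarith [ht.2])]
  norm_num


theorem span_gy_dense_in_L2 (a b α : ℝ) (hab : a < b) (hα : 0 < α) (hα' : α < 1/2) :
    Dense ((Submodule.span ℝ
      {F : Lp ℝ 2 (msr a b) | ∃ y : ℝ, a < y ∧ y ≤ b ∧
        (F : ℝ → ℝ) =ᵐ[msr a b] gy a α y} : Submodule ℝ (Lp ℝ 2 (msr a b))) :
      Set (Lp ℝ 2 (msr a b))) := by
  haveI : IsFiniteMeasure (msr a b) := by
    constructor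
    unfold msr
    rw [Measure.restrict_apply_univ, Real.volume_Ioo]
    exact ENNReal.ofReal_lt_top
  rw [Submodule.dense_iff_topologicalClosure_eq_top, Submodule.topologicalClosure_eq_top_iff,
    Submodule.eq_bot_iff]
  intro f hf
  -- orthogonality gives vanishing weighted integrals
  have hΓpos : 0 < Real.Gamma (1 - α) := Real.Gamma_pos_of_pos (by linarith)
  have hfint : Integrable (⇑f) (msr a b) := (Lp.memLp f).integrable (by norm_num)
  have hfon : IntegrableOn (⇑f) (Ioo a b) := hfint
  have H0 : ∀ y ∈ Ioc a b, ∫ t in Ioo a y, (y - t) ^ (-α) * ⇑f t = 0 := by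
    rintro y ⟨hay, hyb⟩
    have hG : MemLp (gy a α y) 2 (msr a b) := by
      have := (kernel_memL2 hα hα' a b y hyb).const_mul (Real.Gamma (1 - α))⁻¹
      exact this
    set Fy : Lp ℝ 2 (msr a b) := hG.toLp _ with hFy
    have hmem : Fy ∈ {F : Lp ℝ 2 (msr a b) | ∃ y : ℝ, a < y ∧ y ≤ b ∧
        (F : ℝ → ℝ) =ᵐ[msr a b] gy a α y} := ⟨y, hay, hyb, hG.coeFn_toLp⟩
    have hperp : (inner ℝ Fy f : ℝ) = 0 :=
      (Submodule.mem_orthogonal _ f).1 hf Fy (Submodule.subset_span hmem)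
    rw [MeasureTheory.L2.inner_def] at hperp
    simp only [RCLike.inner_apply, starRingEnd_apply, star_trivial] at hperp
    simp_rw [mul_comm (⇑f _)] at hperp
    have heq : ∫ x, (Fy : ℝ → ℝ) x * ⇑f x ∂(msr a b)
        = ∫ x, gy a α y x * ⇑f x ∂(msr a b) := by
      refine integral_congr_ae ?_
      filter_upwards [hG.coeFn_toLp] with x hx
      rw [hx]
    rw [heq] at hperp
    have hcalc : ∫ x, gy a α y x * ⇑f x ∂(msr a b)
        = (Real.Gamma (1 - α))⁻¹ * ∫ t in Ioo a y, (y - t) ^ (-α) * ⇑f t := by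
      have h1 : ∀ x, gy a α y x * ⇑f x
          = (Real.Gamma (1 - α))⁻¹ * (Ioo a y).indicator (fun t => (y - t) ^ (-α) * ⇑f t) x := by
        intro x
        rw [gy, mul_assoc]
        congr 1
        simp only [Set.indicator_apply]
        by_cases hx : x ∈ Ioo a y <;> simp [hx]
      simp_rw [h1]
      rw [MeasureTheory.integral_const_mul]
      congr 1
      unfold msr
      rw [integral_indicator measurableSet_Ioo,
        Measure.restrict_restrict measurableSet_Ioo,
        inter_eq_self_of_subset_left (Ioo_subset_Ioo le_rfl hyb)]
    rw [hcalc] at hperp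
    exact (mul_eq_zero.mp hperp).resolve_left (inv_ne_zero (ne_of_gt hΓpos))
  -- iterate the Fubini step
  have Hn : ∀ n : ℕ, ∀ y ∈ Ioc a b, ∫ t in Ioo a y, (y - t) ^ ((n : ℝ) - α) * ⇑f t = 0 := by
    intro n
    induction n with
    | zero => simpa using H0
    | succ n ih =>
      have h' := fubini_step hab (β := (n : ℝ) - α) (by
        have : (0:ℝ) ≤ (n : ℝ) := Nat.cast_nonneg n
        linarith) hfon ih
      intro y hy
      have := h' y hy
      rwa [show ((n : ℝ) - α) + 1 = ((n + 1 : ℕ) : ℝ) - α by push_cast; ring] at this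
  -- the weight function g
  set g : ℝ → ℝ := fun t => (b - t) ^ (-α) * ⇑f t with hg
  have hker : MemLp (fun t : ℝ => (b - t) ^ (-α)) 2 (msr a b) := by
    have h2 := kernel_memL2 hα hα' a b b le_rfl
    refine h2.ae_eq ?_
    unfold msr
    filter_upwards [ae_restrict_mem measurableSet_Ioo] with t ht
    rw [Set.indicator_of_mem ht]
  have hgint : IntegrableOn g (Ioo a b) := by
    have hin := MeasureTheory.L2.integrable_inner (𝕜 := ℝ) (hker.toLp _) f
    simp only [RCLike.inner_apply, starRingEnd_apply, star_trivial] at hin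
    have : Integrable g (msr a b) := by
      refine hin.congr ?_
      filter_upwards [hker.coeFn_toLp] with x hx
      rw [hx]
      exact mul_comm _ _
    exact this
  have hmom : ∀ n : ℕ, ∫ t in Ioo a b, (b - t) ^ n * g t = 0 := by
    intro n
    have := Hn n b ⟨hab, le_rfl⟩
    rw [← this]
    refine integral_congr_ae ?_
    filter_upwards [ae_restrict_mem measurableSet_Ioo] with t ht
    have hpos : 0 < b - t := by linarith [ht.2]
    rw [hg]
    rw [← mul_assoc, ← Real.rpow_natCast (b - t) n, ← Real.rpow_add hpos]
    ring_nf
  have hzero := moments_zero hab hgint hmom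
  have hfzero : ⇑f =ᵐ[msr a b] 0 := by
    unfold msr
    filter_upwards [hzero, ae_restrict_mem measurableSet_Ioo] with t ht1 ht2
    have hpos : 0 < b - t := by linarith [ht2.2]
    have hne : (b - t) ^ (-α) ≠ 0 := ne_of_gt (Real.rpow_pos_of_pos hpos _)
    have := (mul_eq_zero.mp ht1).resolve_left hne
    exact this
  exact Lp.eq_zero_iff_ae_eq_zero.mpr hfzero
end
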